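/- arXiv:1302.1999 — 5 statements merged into one kernel-verified Lean document; each statement's English description precedes it below -/
import Mathlib

section
/- Under the assumptions on F, the second-order coefficient of the power expansion in q is P^(2)(z,y) = ρ(y−z)·[1 + ρ(z−1)·(2−ρ)/(1−ρ)] + ρ(z−1)·((1+ρ(z−1))/(1−ρ))·[1 − ρ(2−ρ)/(1−ρ)]. -/
open scoped BigOperators

noncomputable section

/-- Polynomials in `z` (outer variable) with coefficients polynomials in `y` (inner variable);
this is the ring in which the coefficients `P^(k)(z,y)` live. -/
abbrev Bzy : Type := Polynomial (Polynomial ℂ)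

/-- The variable `y` as an element of `Bzy` (the outer variable `Polynomial.X` is `z`). -/
def yB : Bzy := Polynomial.C Polynomial.X

/-- A complex constant as an element of `Bzy`. -/
def cB (c : ℂ) : Bzy := Polynomial.C (Polynomial.C c)

/-- The power series `u = z + q (y - z)` in the variable `q`, with coefficients in `Bzy`. -/
def useries : PowerSeries Bzy :=
  PowerSeries.C (R := Bzy) Polynomial.X + PowerSeries.X * PowerSeries.C (R := Bzy) (yB - Polynomial.X)

/-- The inclusion of complex constants into `Bzy[[q]]`. -/
def constHom : ℂ →+* PowerSeries Bzy :=
  (PowerSeries.C (R := Bzy)).comp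
    ((Polynomial.C : Polynomial ℂ →+* Bzy).comp (Polynomial.C : ℂ →+* Polynomial ℂ))

/-- Substitution of `u = z + q(y-z)` for the variable in a polynomial in `y`. -/
def substY : Polynomial ℂ →+* PowerSeries Bzy :=
  Polynomial.eval₂RingHom constHom useries

/-- Substitution `z ↦ z`, `y ↦ u = z + q(y-z)` in a polynomial in `z` and `y`. -/
def substZY : Bzy →+* PowerSeries Bzy :=
  Polynomial.eval₂RingHom substY (PowerSeries.C (R := Bzy) Polynomial.X)

/-- The formal functional equation `z·F(z,y) = (1-ρ+ρu)·[(z-1)·F(0,u) + F(z,u)]`, where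
`F = Σ_k q^k P^(k)(z,y)`, `F(0,u)` is obtained by setting `z = 0` (i.e. taking the coefficient
of `z^0`) and substituting `u` for `y`, and `F(z,u)` by substituting `u` for `y`; the `m`-th
coefficient of `F(z,u)` is `Σ_{k ≤ m} [q^(m-k)] (P^(k)(z, z + q(y-z)))`, and similarly
for `F(0,u)`. -/
def FuncEq (ρ : ℝ) (P : ℕ → Bzy) : Prop :=
  PowerSeries.C (R := Bzy) Polynomial.X * PowerSeries.mk (fun k => P k) =
    (constHom (1 - (ρ : ℂ)) + constHom (ρ : ℂ) * useries) *
      (PowerSeries.C (R := Bzy) (Polynomial.X - 1) *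
          PowerSeries.mk (fun m => ∑ k ∈ Finset.range (m + 1),
            PowerSeries.coeff (R := Bzy) (m - k) (substY ((P k).coeff 0))) +
        PowerSeries.mk (fun m => ∑ k ∈ Finset.range (m + 1),
          PowerSeries.coeff (R := Bzy) (m - k) (substZY (P k))))

/-- `P^(0)(z,y)` does not depend on `y`. -/
def IndepY (P : ℕ → Bzy) : Prop := ∀ n : ℕ, ∃ c : ℂ, (P 0).coeff n = Polynomial.C c

/-- Boundary conditions: `P^(0)(0,1) = 1 - ρ` and `P^(k)(0,1) = 0` for all `k ≥ 1`. -/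
def Boundary (ρ : ℝ) (P : ℕ → Bzy) : Prop :=
  ((P 0).coeff 0).eval 1 = 1 - (ρ : ℂ) ∧ ∀ k : ℕ, 1 ≤ k → ((P k).coeff 0).eval 1 = 0

/-- Derivative with respect to the inner variable `y`. -/
def dy (p : Bzy) : Bzy :=
  p.sum fun n a => Polynomial.C (Polynomial.derivative a) * Polynomial.X ^ n

/-- The polynomial `P^(k)(0,y) + (P^(k)(z,y) - P^(k)(0,y))/z`, where the quotient is exact
polynomial division by the monic polynomial `z`. -/
def bracket (P : ℕ → Bzy) (k : ℕ) : Bzy :=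
  Polynomial.C ((P k).coeff 0) + (P k - Polynomial.C ((P k).coeff 0)) /ₘ Polynomial.X

/-- `a_j^k(z) = ∂_y^j [P^(k)(0,y) + (P^(k)(z,y) - P^(k)(0,y))/z] |_{y=z}`, a polynomial
in the single variable `z`. -/
def aCoef (P : ℕ → Bzy) (j k : ℕ) : Polynomial ℂ :=
  Polynomial.eval₂ (RingHom.id (Polynomial ℂ)) Polynomial.X ((dy^[j]) (bracket P k))

/-- Reinterpret a polynomial in the single variable `z` as an element of `Bzy`. -/
def embZ : Polynomial ℂ →+* Bzy := Polynomial.mapRingHom (Polynomial.C : ℂ →+* Polynomial ℂ)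

/-- `A_j^k(z) = jρ a_{j-1}^{k-j}(z) + (1+ρ(z-1)) a_j^{k-j}(z)` for `1 ≤ j ≤ k`,
`A_0^0(z) = 1 + ρ(z-1)`, and `A_j^k(z) = 0` otherwise. -/
def Acoef (ρ : ℝ) (P : ℕ → Bzy) (j k : ℕ) : Polynomial ℂ :=
  if 1 ≤ j ∧ j ≤ k then
    (j : Polynomial ℂ) * Polynomial.C (ρ : ℂ) * aCoef P (j - 1) (k - j) +
      (1 + Polynomial.C (ρ : ℂ) * (Polynomial.X - 1)) * aCoef P j (k - j)
  else if j = 0 ∧ k = 0 then 1 + Polynomial.C (ρ : ℂ) * (Polynomial.X - 1)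
  else 0

end

noncomputable section AuxProof
open Polynomial

/-- Diagonal substitution `y ↦ z`. -/
def dg (p : Bzy) : Polynomial ℂ := p.eval₂ (RingHom.id _) Polynomial.X

lemma constHom_eq (c : ℂ) : constHom c = PowerSeries.C (R := Bzy) (cB c) := rfl

lemma embZ_inj : Function.Injective embZ := map_injective _ C_injective

lemma embZ_coeff (q : Polynomial ℂ) (n : ℕ) : (embZ q).coeff n = C (q.coeff n) :=
  Polynomial.coeff_map _ _

lemma embZ_X : embZ X = (X : Bzy) := by simp [embZ]

lemma embZ_C (c : ℂ) : embZ (C c) = cB c := by simp [embZ, cB]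

lemma substY_C (c : ℂ) : substY (Polynomial.C c) = constHom c := by simp [substY]

lemma substY_X : substY X = useries := by simp [substY]

lemma substZY_C (q : Polynomial ℂ) : substZY (Polynomial.C q) = substY q := by
  simp [substZY]

lemma substZY_X : substZY X = PowerSeries.C (R := Bzy) X := by simp [substZY]

lemma ccY_hom : (PowerSeries.constantCoeff (R := Bzy)).comp substY = embZ := by
  apply Polynomial.ringHom_ext
  · intro a
    simp [substY_C, constHom_eq, cB, embZ]
  · simp [substY_X, useries, embZ]

lemma cc_substY (q : Polynomial ℂ) :
    PowerSeries.constantCoeff (R := Bzy) (substY q) = embZ q :=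
  RingHom.congr_fun ccY_hom q

lemma cc_substZY (p : Bzy) :
    PowerSeries.constantCoeff (R := Bzy) (substZY p) = embZ (dg p) := by
  rw [substZY, coe_eval₂RingHom, Polynomial.hom_eval₂, ccY_hom, dg,
    Polynomial.hom_eval₂, RingHom.comp_id]
  simp [embZ]

lemma substZY_embZ (q : Polynomial ℂ) :
    substZY (embZ q) = PowerSeries.C (R := Bzy) (embZ q) := by
  have : substZY.comp embZ = (PowerSeries.C (R := Bzy)).comp embZ := by
    apply Polynomial.ringHom_ext
    · intro a
      simp [embZ, substZY_C, substY_C, constHom_eq, cB]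
    · simp [embZ, substZY_X]
  exact RingHom.congr_fun this q

lemma dg_embZ (q : Polynomial ℂ) : dg (embZ q) = q := by
  rw [dg, embZ, coe_mapRingHom, eval₂_map]
  simp [eval₂_C_X]

lemma coeff0_substY (q : Polynomial ℂ) :
    PowerSeries.coeff (R := Bzy) 0 (substY q) = embZ q := by
  rw [PowerSeries.coeff_zero_eq_constantCoeff, cc_substY]

lemma coeff0_substZY (p : Bzy) :
    PowerSeries.coeff (R := Bzy) 0 (substZY p) = embZ (dg p) := by
  rw [PowerSeries.coeff_zero_eq_constantCoeff, cc_substZY]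

lemma useries_c0 : PowerSeries.coeff (R := Bzy) 0 useries = X := by
  simp [useries]

lemma useries_c1 : PowerSeries.coeff (R := Bzy) 1 useries = yB - X := by
  simp [useries]

lemma useries_c2 : PowerSeries.coeff (R := Bzy) 2 useries = 0 := by
  simp [useries, PowerSeries.coeff_C]

lemma coeff1_mul (f g : PowerSeries Bzy) :
    PowerSeries.coeff (R := Bzy) 1 (f * g) =
      PowerSeries.coeff (R := Bzy) 0 f * PowerSeries.coeff (R := Bzy) 1 g +
      PowerSeries.coeff (R := Bzy) 1 f * PowerSeries.coeff (R := Bzy) 0 g := by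
  rw [PowerSeries.coeff_mul, Finset.Nat.sum_antidiagonal_eq_sum_range_succ_mk]
  simp [Finset.sum_range_succ]

lemma coeff2_mul (f g : PowerSeries Bzy) :
    PowerSeries.coeff (R := Bzy) 2 (f * g) =
      PowerSeries.coeff (R := Bzy) 0 f * PowerSeries.coeff (R := Bzy) 2 g +
      PowerSeries.coeff (R := Bzy) 1 f * PowerSeries.coeff (R := Bzy) 1 g +
      PowerSeries.coeff (R := Bzy) 2 f * PowerSeries.coeff (R := Bzy) 0 g := by
  rw [PowerSeries.coeff_mul, Finset.Nat.sum_antidiagonal_eq_sum_range_succ_mk]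
  simp [Finset.sum_range_succ]

end AuxProof

noncomputable section AuxProof2
open Polynomial

lemma master (ρ : ℂ) (hρ : (1:ℂ) - ρ ≠ 0) (K : Bzy) (p q : Bzy)
    (hp : (X:Bzy) * p = K + embZ (1 + C ρ * (X - 1)) *
      ((X - 1) * embZ (p.coeff 0) + embZ (dg p)))
    (hq : (X:Bzy) * q = K + embZ (1 + C ρ * (X - 1)) *
      ((X - 1) * embZ (q.coeff 0) + embZ (dg q)))
    (hb : (p.coeff 0).eval 1 = (q.coeff 0).eval 1) : p = q := by
  set g0 : Polynomial ℂ := 1 + C ρ * (X - 1) with hg0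
  set d := p - q with hd
  have hdc : d.coeff 0 = p.coeff 0 - q.coeff 0 := by simp [hd]
  have hdg : dg d = dg p - dg q := by simp [dg, hd, eval₂_sub]
  set w : Polynomial ℂ := g0 * ((X - 1) * d.coeff 0 + dg d) with hw
  have hXd : (X:Bzy) * d = embZ w := by
    have h1 : embZ w = embZ g0 * ((X - 1) * embZ (d.coeff 0) + embZ (dg d)) := by
      simp only [hw, map_mul, map_add]
      congr 2
      simp [embZ]
    rw [h1, hdc, hdg, map_sub, map_sub]
    linear_combination hp - hq
  have hw0 : w.coeff 0 = 0 := by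
    have h2 := congrArg (fun r : Bzy => r.coeff 0) hXd
    simp only [embZ_coeff, Polynomial.mul_coeff_zero, Polynomial.coeff_X_zero,
      zero_mul] at h2
    have := h2.symm
    rwa [← C_0, C_inj] at this
  set w1 := w.divX with hw1
  have hwX : w = X * w1 := by
    have := X_mul_divX_add w
    rw [hw0, map_zero, add_zero] at this
    exact this.symm
  have hdE : d = embZ w1 := by
    have hx : (X:Bzy) ≠ 0 := Polynomial.X_ne_zero
    apply mul_left_cancel₀ hx
    rw [hXd, hwX, map_mul]
    congr 1
    simp [embZ]
  have hkey : embZ (X * w1) = embZ (g0 * ((X - 1) * C (w1.coeff 0) + w1)) := by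
    have e1 : (X:Bzy) * d = embZ g0 * ((X - 1) * embZ (d.coeff 0) + embZ (dg d)) := by
      rw [hdc, hdg, map_sub, map_sub]; linear_combination hp - hq
    rw [hdE] at e1
    have c1 : (embZ w1).coeff 0 = C (w1.coeff 0) := embZ_coeff _ _
    have c2 : dg (embZ w1) = w1 := dg_embZ _
    rw [c1, c2] at e1
    have hxx : embZ (X : Polynomial ℂ) = (X : Bzy) := by simp [embZ]
    calc embZ (X * w1) = (X : Bzy) * embZ w1 := by rw [map_mul, hxx]
      _ = embZ g0 * (((X : Bzy) - 1) * embZ (C (w1.coeff 0)) + embZ w1) := e1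
      _ = embZ (g0 * ((X - 1) * C (w1.coeff 0) + w1)) := by
          simp only [map_mul, map_add, map_sub, map_one, hxx]
  have keyP : X * w1 = g0 * ((X - 1) * C (w1.coeff 0) + w1) := embZ_inj hkey
  have hc0 : w1.coeff 0 = 0 := by
    have h3 := congrArg (fun r : Bzy => (r.coeff 0).eval 1) hdE
    simp only [hdc, embZ_coeff] at h3
    simpa [hb] using h3.symm
  rw [hc0, map_zero, mul_zero, zero_add] at keyP
  have hfac : (X - g0) * w1 = 0 := by linear_combination keyP
  have hzero : w1 = 0 := by
    rcases mul_eq_zero.mp hfac with h | h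
    · exfalso
      have hxg : X - g0 = C (1 - ρ) * (X - 1) := by rw [hg0, map_sub, map_one]; ring
      rw [hxg] at h
      rcases mul_eq_zero.mp h with h' | h'
      · exact hρ (by simpa using C_eq_zero.mp h')
      · have hx1 : (X - 1 : Polynomial ℂ) ≠ 0 := by
          simpa using Polynomial.X_sub_C_ne_zero (1:ℂ)
        exact hx1 h'
    · exact h
  have hd0 : d = 0 := by rw [hdE, hzero, map_zero]
  exact sub_eq_zero.mp (hd ▸ hd0)

end AuxProof2

noncomputable section AuxProof3
open Polynomial

def g0 (r : ℂ) : Polynomial ℂ := 1 + C r * (X - 1)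
def r1 (r : ℂ) : Polynomial ℂ := C r * C ((1 - r)⁻¹) * (X - 1) * g0 r
def p10 (r : ℂ) : Polynomial ℂ := C r * (X - 1)
def b1 (r : ℂ) : Polynomial ℂ := (X - 1) * p10 r + r1 r
def n2 (r : ℂ) : Polynomial ℂ := 1 + C r * (X - 1) * C ((2 - r) * (1 - r)⁻¹)
def s2 (r : ℂ) : Polynomial ℂ :=
  C r * (X - 1) * ((1 + C r * (X - 1)) * C ((1 - r)⁻¹)) * (1 - C (r * (2 - r) * (1 - r)⁻¹))
def p20 (r : ℂ) : Polynomial ℂ := C (r * (1 - r * (2 - r) * (1 - r)⁻¹)) * (X - 1)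

lemma pid0 (r : ℂ) : X * g0 r = g0 r * ((X - 1) * C (1 - r) + g0 r) := by
  apply Polynomial.funext; intro z
  simp [g0]; ring

lemma pidB (r : ℂ) : (X - 1) * C (1 - r) + g0 r = X := by
  apply Polynomial.funext; intro z
  simp [g0]; ring

lemma pid1 (r : ℂ) (h : 1 - r ≠ 0) : X * r1 r = g0 r * ((X - 1) * p10 r + r1 r) := by
  apply Polynomial.funext; intro z
  simp [g0, r1, p10]
  field_simp
  ring

lemma pid2i (r : ℂ) (h : 1 - r ≠ 0) : X * n2 r = b1 r + g0 r * X := by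
  apply Polynomial.funext; intro z
  simp [g0, r1, p10, b1, n2]
  field_simp
  ring

lemma pid2ii (r : ℂ) (h : 1 - r ≠ 0) : X * s2 r = g0 r * ((X - 1) * p20 r + s2 r) := by
  apply Polynomial.funext; intro z
  simp [g0, s2, p20]
  field_simp
  ring

lemma g0_coeff (r : ℂ) : (g0 r).coeff 0 = 1 - r := by
  simp [g0]; ring

lemma r1_coeff (r : ℂ) (h : 1 - r ≠ 0) : (r1 r).coeff 0 = -r := by
  simp [r1, g0, mul_coeff_zero]
  field_simp
  ring

lemma n2_coeff (r : ℂ) : (n2 r).coeff 0 = 1 - r * (2 - r) * (1 - r)⁻¹ := by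
  simp [n2, mul_coeff_zero]
  ring

lemma s2_coeff (r : ℂ) (h : 1 - r ≠ 0) :
    (s2 r).coeff 0 = -(r * (1 - r * (2 - r) * (1 - r)⁻¹)) := by
  simp [s2, mul_coeff_zero]
  field_simp
  left; ring

end AuxProof3

noncomputable section AuxProof4
open Polynomial

def q1e (r : ℂ) : Bzy := cB r * (yB - X) + embZ (r1 r)
def q2e (r : ℂ) : Bzy := cB r * (yB - X) * embZ (n2 r) + embZ (s2 r)

lemma cB_mul (a b : ℂ) : cB (a * b) = cB a * cB b := by simp [cB]
lemma cB_sub (a b : ℂ) : cB (a - b) = cB a - cB b := by simp [cB]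
lemma cB_add (a b : ℂ) : cB (a + b) = cB a + cB b := by simp [cB]
lemma cB_one : cB 1 = 1 := by simp [cB]

lemma dg_add (p q : Bzy) : dg (p + q) = dg p + dg q := by simp [dg, eval₂_add]
lemma dg_sub (p q : Bzy) : dg (p - q) = dg p - dg q := by simp [dg, eval₂_sub]
lemma dg_mul (p q : Bzy) : dg (p * q) = dg p * dg q := eval₂_mul _ _
lemma dg_cB (c : ℂ) : dg (cB c) = C c := by simp [dg, cB]
lemma dg_yB : dg yB = X := by simp [dg, yB]
lemma dg_X : dg (X : Bzy) = X := by simp [dg]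

lemma q1_coeff0 (r : ℂ) (h : 1 - r ≠ 0) : (q1e r).coeff 0 = p10 r := by
  simp [q1e, cB, yB, mul_coeff_zero, embZ_coeff, r1_coeff r h, p10]
  ring

lemma q1_dg (r : ℂ) : dg (q1e r) = r1 r := by
  simp [q1e, dg_add, dg_mul, dg_sub, dg_cB, dg_yB, dg_X, dg_embZ]

lemma q2_coeff0 (r : ℂ) (h : 1 - r ≠ 0) : (q2e r).coeff 0 = p20 r := by
  simp [q2e, cB, yB, mul_coeff_zero, embZ_coeff, n2_coeff, s2_coeff r h, p20]
  ring

lemma q2_dg (r : ℂ) : dg (q2e r) = s2 r := by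
  simp [q2e, dg_add, dg_mul, dg_sub, dg_cB, dg_yB, dg_X, dg_embZ]

lemma q2_eq (r : ℂ) :
    cB r * (yB - X) * (1 + cB r * (X - 1) * cB ((2 - r) * (1 - r)⁻¹)) +
      cB r * (X - 1) * ((1 + cB r * (X - 1)) * cB ((1 - r)⁻¹)) *
        (1 - cB (r * (2 - r) * (1 - r)⁻¹)) = q2e r := by
  simp only [q2e, n2, s2, map_add, map_mul, map_one, map_sub, embZ_C, embZ_X,
    cB_mul, cB_sub, cB_add, cB_one]

lemma cB_constHom_coeff (c : ℂ) (n : ℕ) (hn : n ≠ 0) :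
    PowerSeries.coeff (R := Bzy) n (constHom c) = 0 := by
  rw [constHom_eq]
  simp [PowerSeries.coeff_C, hn]

lemma c1Y_C (c : ℂ) : PowerSeries.coeff (R := Bzy) 1 (substY (C c)) = 0 := by
  rw [substY_C]; exact cB_constHom_coeff c 1 one_ne_zero

lemma c2Y_C (c : ℂ) : PowerSeries.coeff (R := Bzy) 2 (substY (C c)) = 0 := by
  rw [substY_C]; exact cB_constHom_coeff c 2 two_ne_zero

lemma c1Y_p10 (r : ℂ) : PowerSeries.coeff (R := Bzy) 1 (substY (p10 r)) = cB r * (yB - X) := by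
  rw [p10, map_mul, map_sub, substY_C, substY_X, map_one]
  simp [constHom_eq, PowerSeries.coeff_C_mul, useries_c1, PowerSeries.coeff_one]

lemma substZY_cB (c : ℂ) : substZY (cB c) = constHom c := by
  rw [cB, substZY_C, substY_C]

lemma substZY_yB : substZY yB = useries := by
  rw [yB, substZY_C, substY_X]

lemma substZY_q1 (r : ℂ) :
    substZY (q1e r) = PowerSeries.C (R := Bzy) (cB r) * (useries - PowerSeries.C (R := Bzy) X) +
      PowerSeries.C (R := Bzy) (embZ (r1 r)) := by
  rw [q1e, map_add, map_mul, map_sub, substZY_embZ, substZY_cB, substZY_yB, substZY_X,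
    constHom_eq]

lemma c1ZY_q1 (r : ℂ) :
    PowerSeries.coeff (R := Bzy) 1 (substZY (q1e r)) = cB r * (yB - X) := by
  rw [substZY_q1]
  simp [PowerSeries.coeff_C_mul, useries_c1, PowerSeries.coeff_C]

lemma c2ZY_q1 (r : ℂ) : PowerSeries.coeff (R := Bzy) 2 (substZY (q1e r)) = 0 := by
  rw [substZY_q1]
  simp [PowerSeries.coeff_C_mul, useries_c2, PowerSeries.coeff_C]

lemma cZY_embZ (q : Polynomial ℂ) (n : ℕ) (hn : n ≠ 0) :
    PowerSeries.coeff (R := Bzy) n (substZY (embZ q)) = 0 := by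
  rw [substZY_embZ]
  simp [PowerSeries.coeff_C, hn]

lemma cc_constHom (c : ℂ) : PowerSeries.constantCoeff (R := Bzy) (constHom c) = cB c := by
  rw [constHom_eq]; simp

lemma cc_useries : PowerSeries.constantCoeff (R := Bzy) useries = X := by
  simp [useries]

end AuxProof4

open Polynomial

theorem stmt12 (ρ : ℝ) (hρ : ρ ∈ Set.Ioo (0 : ℝ) 1) (P : ℕ → Bzy)
    (hF : FuncEq ρ P) (hI : IndepY P) (hB : Boundary ρ P) :
    P 2 = cB (ρ : ℂ) * (yB - Polynomial.X) *
        (1 + cB (ρ : ℂ) * (Polynomial.X - 1) * cB ((2 - (ρ : ℂ)) * (1 - (ρ : ℂ))⁻¹)) +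
      cB (ρ : ℂ) * (Polynomial.X - 1) *
        ((1 + cB (ρ : ℂ) * (Polynomial.X - 1)) * cB ((1 - (ρ : ℂ))⁻¹)) *
        (1 - cB ((ρ : ℂ) * (2 - (ρ : ℂ)) * (1 - (ρ : ℂ))⁻¹)) := by
  obtain ⟨hB0, hBk⟩ := hB
  have hρ1 : (1 : ℂ) - (ρ : ℂ) ≠ 0 := by
    have h1 : (ρ : ℂ) ≠ 1 := by exact_mod_cast ne_of_lt hρ.2
    exact sub_ne_zero.mpr (Ne.symm h1)
  rw [FuncEq] at hF
  set Sf : ℕ → Bzy := fun m => ∑ k ∈ Finset.range (m + 1),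
      PowerSeries.coeff (R := Bzy) (m - k) (substY ((P k).coeff 0)) with hSf
  set Tf : ℕ → Bzy := fun m => ∑ k ∈ Finset.range (m + 1),
      PowerSeries.coeff (R := Bzy) (m - k) (substZY (P k)) with hTf
  -- A-series coefficients
  set Aser := constHom (1 - (ρ:ℂ)) + constHom (ρ:ℂ) * useries with hAser
  have hA0 : PowerSeries.constantCoeff (R := Bzy) Aser = embZ (g0 (ρ:ℂ)) := by
    rw [hAser, map_add, map_mul, cc_constHom, cc_constHom, cc_useries]
    simp only [g0, map_add, map_mul, map_one, map_sub, embZ_C, embZ_X, cB_sub, cB_one]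
    ring
  have hA1 : PowerSeries.coeff (R := Bzy) 1 Aser = cB (ρ:ℂ) * (yB - X) := by
    rw [hAser, map_add, cB_constHom_coeff _ 1 one_ne_zero, constHom_eq,
      PowerSeries.coeff_C_mul, useries_c1]
    ring
  have hA2 : PowerSeries.coeff (R := Bzy) 2 Aser = 0 := by
    rw [hAser, map_add, cB_constHom_coeff _ 2 two_ne_zero, constHom_eq,
      PowerSeries.coeff_C_mul, useries_c2]
    ring
  -- coefficient equations
  have e0 : X * P 0 = embZ (g0 (ρ:ℂ)) * ((X - 1) * Sf 0 + Tf 0) := by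
    have h := congrArg (PowerSeries.constantCoeff (R := Bzy)) hF
    simpa only [map_mul, map_add, PowerSeries.constantCoeff_C,
      PowerSeries.constantCoeff_mk, hA0] using h
  have e1 : X * P 1 = embZ (g0 (ρ:ℂ)) * ((X - 1) * Sf 1 + Tf 1) +
      cB (ρ:ℂ) * (yB - X) * ((X - 1) * Sf 0 + Tf 0) := by
    have h := congrArg (PowerSeries.coeff (R := Bzy) 1) hF
    rw [PowerSeries.coeff_C_mul, coeff1_mul, hA1] at h
    simpa only [map_add, PowerSeries.coeff_C_mul, PowerSeries.coeff_mk,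
      PowerSeries.coeff_zero_eq_constantCoeff, PowerSeries.constantCoeff_C,
      PowerSeries.constantCoeff_mk, hA0] using h
  have e2 : X * P 2 = embZ (g0 (ρ:ℂ)) * ((X - 1) * Sf 2 + Tf 2) +
      cB (ρ:ℂ) * (yB - X) * ((X - 1) * Sf 1 + Tf 1) := by
    have h := congrArg (PowerSeries.coeff (R := Bzy) 2) hF
    rw [PowerSeries.coeff_C_mul, coeff2_mul, hA1, hA2] at h
    simpa only [map_add, PowerSeries.coeff_C_mul, PowerSeries.coeff_mk,
      PowerSeries.coeff_zero_eq_constantCoeff, PowerSeries.constantCoeff_C,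
      PowerSeries.constantCoeff_mk, hA0, zero_mul, add_zero] using h
  -- Order 0
  have hS0 : Sf 0 = embZ ((P 0).coeff 0) := by
    rw [hSf]; simp [coeff0_substY]
  have hT0 : Tf 0 = embZ (dg (P 0)) := by
    rw [hTf]; simp [coeff0_substZY]
  have hp0 : X * P 0 = 0 + embZ (g0 (ρ:ℂ)) *
      ((X - 1) * embZ ((P 0).coeff 0) + embZ (dg (P 0))) := by
    rw [zero_add, ← hS0, ← hT0]; exact e0
  have hq0 : X * embZ (g0 (ρ:ℂ)) = 0 + embZ (g0 (ρ:ℂ)) *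
      ((X - 1) * embZ ((embZ (g0 (ρ:ℂ))).coeff 0) + embZ (dg (embZ (g0 (ρ:ℂ))))) := by
    rw [zero_add, dg_embZ, embZ_coeff, g0_coeff]
    have h := congrArg embZ (pid0 (ρ:ℂ))
    simp only [map_mul, map_add, map_sub, map_one, embZ_X, embZ_C, cB_sub, cB_one] at h ⊢
    linear_combination h
  have hbd0 : ((P 0).coeff 0).eval 1 = ((embZ (g0 (ρ:ℂ))).coeff 0).eval 1 := by
    rw [embZ_coeff, g0_coeff, hB0, eval_C]
  have hP0 : P 0 = embZ (g0 (ρ:ℂ)) := master (ρ:ℂ) hρ1 0 _ _ hp0 hq0 hbd0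
  -- Order 1
  have hP0c : (P 0).coeff 0 = C (1 - (ρ:ℂ)) := by rw [hP0, embZ_coeff, g0_coeff]
  have hS1 : Sf 1 = embZ ((P 1).coeff 0) := by
    rw [hSf]
    simp [Finset.sum_range_succ, hP0c, c1Y_C, coeff0_substY]
  have hT1 : Tf 1 = embZ (dg (P 1)) := by
    rw [hTf]
    simp [Finset.sum_range_succ, hP0, cZY_embZ _ 1 one_ne_zero, coeff0_substZY]
  have hB0T : (X - 1) * Sf 0 + Tf 0 = X := by
    rw [hS0, hT0, hP0c, hP0, dg_embZ]
    have h := congrArg embZ (pidB (ρ:ℂ))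
    simp only [map_add, map_mul, map_sub, map_one, embZ_X, embZ_C, cB_sub, cB_one] at h ⊢
    linear_combination h
  rw [hB0T] at e1
  have hp1 : X * P 1 = cB (ρ:ℂ) * (yB - X) * X + embZ (g0 (ρ:ℂ)) *
      ((X - 1) * embZ ((P 1).coeff 0) + embZ (dg (P 1))) := by
    rw [← hS1, ← hT1]; linear_combination e1
  have hq1 : X * q1e (ρ:ℂ) = cB (ρ:ℂ) * (yB - X) * X + embZ (g0 (ρ:ℂ)) *
      ((X - 1) * embZ ((q1e (ρ:ℂ)).coeff 0) + embZ (dg (q1e (ρ:ℂ)))) := by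
    rw [q1_coeff0 _ hρ1, q1_dg]
    simp only [q1e]
    have h := congrArg embZ (pid1 (ρ:ℂ) hρ1)
    simp only [map_mul, map_add, map_sub, map_one, embZ_X] at h
    linear_combination h
  have hbd1 : ((P 1).coeff 0).eval 1 = ((q1e (ρ:ℂ)).coeff 0).eval 1 := by
    rw [q1_coeff0 _ hρ1, hBk 1 le_rfl, p10]
    simp
  have hP1 : P 1 = q1e (ρ:ℂ) := master (ρ:ℂ) hρ1 _ _ _ hp1 hq1 hbd1
  -- Order 2
  have hP1c : (P 1).coeff 0 = p10 (ρ:ℂ) := by rw [hP1, q1_coeff0 _ hρ1]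
  have hS2 : Sf 2 = cB (ρ:ℂ) * (yB - X) + embZ ((P 2).coeff 0) := by
    rw [hSf]
    simp [Finset.sum_range_succ, hP0c, hP1c, c2Y_C, c1Y_p10, coeff0_substY]
  have hT2 : Tf 2 = cB (ρ:ℂ) * (yB - X) + embZ (dg (P 2)) := by
    rw [hTf]
    simp [Finset.sum_range_succ, hP0, hP1, cZY_embZ _ 2 two_ne_zero, c1ZY_q1,
      coeff0_substZY]
  have hB1T : (X - 1) * Sf 1 + Tf 1 = embZ (b1 (ρ:ℂ)) := by
    rw [hS1, hT1, hP1c, hP1, q1_dg]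
    simp only [b1, map_add, map_mul, map_sub, map_one, embZ_X]
  rw [hS2, hT2, hB1T] at e2
  have hp2 : X * P 2 = cB (ρ:ℂ) * (yB - X) * (embZ (b1 (ρ:ℂ)) + embZ (g0 (ρ:ℂ)) * X) +
      embZ (g0 (ρ:ℂ)) * ((X - 1) * embZ ((P 2).coeff 0) + embZ (dg (P 2))) := by
    linear_combination e2
  have hq2 : X * q2e (ρ:ℂ) = cB (ρ:ℂ) * (yB - X) * (embZ (b1 (ρ:ℂ)) + embZ (g0 (ρ:ℂ)) * X) +
      embZ (g0 (ρ:ℂ)) * ((X - 1) * embZ ((q2e (ρ:ℂ)).coeff 0) + embZ (dg (q2e (ρ:ℂ)))) := by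
    rw [q2_coeff0 _ hρ1, q2_dg]
    simp only [q2e]
    have h1 := congrArg embZ (pid2i (ρ:ℂ) hρ1)
    have h2 := congrArg embZ (pid2ii (ρ:ℂ) hρ1)
    simp only [map_mul, map_add, map_sub, map_one, embZ_X] at h1 h2
    linear_combination cB (ρ:ℂ) * (yB - X) * h1 + h2
  have hbd2 : ((P 2).coeff 0).eval 1 = ((q2e (ρ:ℂ)).coeff 0).eval 1 := by
    rw [q2_coeff0 _ hρ1, hBk 2 (by norm_num), p20]
    simp
  have hP2 : P 2 = q2e (ρ:ℂ) := master (ρ:ℂ) hρ1 _ _ _ hp2 hq2 hbd2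
  rw [hP2]
  exact (q2_eq (ρ:ℂ)).symm
end

section
/- Under the assumptions on F, for every j ≥ 3 the polynomials A_j^{j+1}(z) and A_j^{j+2}(z) are identically zero (a consequence of P^(1)(z,y) and P^(2)(z,y) being of degree at most 1 in y). -/
open scoped BigOperators

noncomputable section Aux
namespace S14
open Polynomial PowerSeries

/-- all coefficients (polynomials in y) have natDegree ≤ d -/
def Dle (d : ℕ) (p : Bzy) : Prop := ∀ n, (p.coeff n).natDegree ≤ d

lemma Dle_zero (d : ℕ) : Dle d (0 : Bzy) := fun n => by simp

lemma Dle_mono {d e : ℕ} (h : d ≤ e) {p : Bzy} (hp : Dle d p) : Dle e p :=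
  fun n => (hp n).trans h

lemma Dle_add {d : ℕ} {p q : Bzy} (hp : Dle d p) (hq : Dle d q) : Dle d (p + q) := fun n => by
  rw [Polynomial.coeff_add]
  exact (Polynomial.natDegree_add_le _ _).trans (max_le (hp n) (hq n))

lemma Dle_sum {d : ℕ} {ι : Type*} (s : Finset ι) (f : ι → Bzy)
    (h : ∀ i ∈ s, Dle d (f i)) : Dle d (∑ i ∈ s, f i) := fun n => by
  rw [Polynomial.finset_sum_coeff]
  exact natDegree_sum_le_of_forall_le _ _ fun i hi => h i hi n

lemma Dle_mul {d e : ℕ} {p q : Bzy} (hp : Dle d p) (hq : Dle e q) : Dle (d + e) (p * q) :=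
  fun n => by
  rw [Polynomial.coeff_mul]
  exact natDegree_sum_le_of_forall_le _ _ fun i _ =>
    (Polynomial.natDegree_mul_le).trans (add_le_add (hp i.1) (hq i.2))

lemma Dle_X : Dle 0 (Polynomial.X : Bzy) := fun n => by
  rw [Polynomial.coeff_X]
  split_ifs <;> simp

lemma Dle_cB (c : ℂ) : Dle 0 (cB c) := fun n => by
  rcases n with _ | n <;> simp [cB, Polynomial.coeff_C]

lemma Dle_C {v : Polynomial ℂ} {d : ℕ} (h : v.natDegree ≤ d) : Dle d (Polynomial.C v : Bzy) :=
  fun n => by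
  rcases n with _ | n <;> simp [Polynomial.coeff_C, h]

lemma Dle_one (d : ℕ) : Dle d (1 : Bzy) := by
  have h1 : (1 : Bzy) = Polynomial.C 1 := by simp
  rw [h1]; exact Dle_C (by simp)

lemma Dle_Xpow (m : ℕ) : Dle 0 ((Polynomial.X : Bzy) ^ m) := fun n => by
  rw [Polynomial.coeff_X_pow]
  split_ifs <;> simp

lemma Dle_yB_sub_X : Dle 1 (yB - Polynomial.X) := fun n => by
  rw [Polynomial.coeff_sub]
  refine (Polynomial.natDegree_sub_le _ _).trans (max_le ?_ ?_)
  · rcases n with _ | n <;> simp [yB, Polynomial.coeff_C]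
  · exact (Dle_X n).trans (by norm_num)

/-- The i-th q-coefficient has y-degree ≤ i. -/
def Diag (φ : PowerSeries Bzy) : Prop := ∀ i, Dle i (PowerSeries.coeff (R := Bzy) i φ)

lemma Diag_add {φ ψ} (h1 : Diag φ) (h2 : Diag ψ) : Diag (φ + ψ) := fun i => by
  rw [map_add]; exact Dle_add (h1 i) (h2 i)

lemma Diag_mul {φ ψ} (h1 : Diag φ) (h2 : Diag ψ) : Diag (φ * ψ) := fun i => by
  rw [PowerSeries.coeff_mul]
  refine Dle_sum _ _ fun p hp => ?_
  have hpi : p.1 + p.2 = i := Finset.HasAntidiagonal.mem_antidiagonal.mp hp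
  exact Dle_mono hpi.le (Dle_mul (h1 p.1) (h2 p.2))

lemma Diag_C {v : Bzy} (h : Dle 0 v) : Diag (PowerSeries.C (R := Bzy) v) := fun i => by
  rw [PowerSeries.coeff_C]
  split_ifs with hi
  · exact Dle_mono (Nat.zero_le _) h
  · exact Dle_zero _

lemma Diag_one : Diag (1 : PowerSeries Bzy) := by
  have : (1 : PowerSeries Bzy) = PowerSeries.C (R := Bzy) 1 := by simp
  rw [this]; exact Diag_C (Dle_one 0)

lemma Diag_pow {φ} (h : Diag φ) (m : ℕ) : Diag (φ ^ m) := by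
  induction m with
  | zero => simpa using Diag_one
  | succ m ih => rw [pow_succ]; exact Diag_mul ih h

lemma Diag_useries : Diag useries := by
  intro i
  rcases i with _ | _ | n
  · simp only [useries, map_add, PowerSeries.coeff_zero_eq_constantCoeff, map_mul]
    simpa [useries, PowerSeries.coeff_C] using Dle_add (d := 0) (p := (Polynomial.X : Bzy))
      (q := 0) Dle_X (Dle_zero 0)
  · have : PowerSeries.coeff (R := Bzy) 1 useries = yB - Polynomial.X := by
      simp [useries, PowerSeries.coeff_C, PowerSeries.coeff_succ_X_mul]
    rw [this]; exact Dle_yB_sub_X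
  · have : PowerSeries.coeff (R := Bzy) (n + 2) useries = 0 := by
      have : (n:ℕ) + 2 = (n+1) + 1 := rfl
      simp [useries, PowerSeries.coeff_C, this, PowerSeries.coeff_succ_X_mul]
    rw [this]; exact Dle_zero _

lemma Diag_constHom (c : ℂ) : Diag (constHom c) := Diag_C (Dle_cB c)

lemma Diag_substY (a : Polynomial ℂ) : Diag (substY a) := by
  induction a using Polynomial.induction_on' with
  | add p q hp hq => rw [map_add]; exact Diag_add hp hq
  | monomial n c =>
      have : substY (Polynomial.monomial n c) = constHom c * useries ^ n := by
        simp [substY, Polynomial.eval₂_monomial]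
      rw [this]; exact Diag_mul (Diag_constHom c) (Diag_pow Diag_useries n)

lemma Diag_substZY (p : Bzy) : Diag (substZY p) := by
  induction p using Polynomial.induction_on' with
  | add p q hp hq => rw [map_add]; exact Diag_add hp hq
  | monomial n a =>
      have : substZY (Polynomial.monomial n a) =
          substY a * (PowerSeries.C (R := Bzy) Polynomial.X) ^ n := by
        simp [substZY, Polynomial.eval₂_monomial]
      rw [this]
      exact Diag_mul (Diag_substY a) (Diag_pow (Diag_C Dle_X) n)

lemma coeff_succ_useries_mul (φ : PowerSeries Bzy) (i : ℕ) :
    PowerSeries.coeff (R := Bzy) (i+1) (useries * φ) =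
      Polynomial.X * PowerSeries.coeff (R := Bzy) (i+1) φ +
        (yB - Polynomial.X) * PowerSeries.coeff (R := Bzy) i φ := by
  rw [useries, add_mul, map_add, PowerSeries.coeff_C_mul, mul_assoc,
    PowerSeries.coeff_succ_X_mul, PowerSeries.coeff_C_mul]

lemma coeff_useries_pow_eq_zero : ∀ (m i : ℕ), m < i →
    PowerSeries.coeff (R := Bzy) i (useries ^ m) = 0 := by
  intro m
  induction m with
  | zero =>
      intro i hi
      rcases i with _ | i
      · omega
      · simp [PowerSeries.coeff_one]
  | succ m ih =>
      intro i hi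
      rcases i with _ | i
      · omega
      rw [pow_succ, mul_comm, coeff_succ_useries_mul,
        ih (i+1) (by omega), ih i (by omega)]
      simp

lemma dle_coeff_substY {a : Polynomial ℂ} {d : ℕ} (h : a.natDegree ≤ d) (i : ℕ) :
    Dle d (PowerSeries.coeff (R := Bzy) i (substY a)) := by
  have hs : substY a = a.sum fun m c => constHom c * useries ^ m := by
    simp [substY, Polynomial.eval₂_eq_sum]
  rw [hs, Polynomial.sum_def, map_sum]
  refine Dle_sum _ _ fun m hm => ?_
  by_cases hmi : m < i
  · have : PowerSeries.coeff (R := Bzy) i (constHom (a.coeff m) * useries ^ m) =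
        cB (a.coeff m) * PowerSeries.coeff (R := Bzy) i (useries ^ m) := by
      simp [constHom, cB, PowerSeries.coeff_C_mul]
    rw [this, coeff_useries_pow_eq_zero m i hmi, mul_zero]
    exact Dle_zero _
  · have : PowerSeries.coeff (R := Bzy) i (constHom (a.coeff m) * useries ^ m) =
        cB (a.coeff m) * PowerSeries.coeff (R := Bzy) i (useries ^ m) := by
      simp [constHom, cB, PowerSeries.coeff_C_mul]
    rw [this]
    have h1 : Dle i (cB (a.coeff m) * PowerSeries.coeff (R := Bzy) i (useries ^ m)) := by
      have := Dle_mul (Dle_cB (a.coeff m)) (Diag_pow Diag_useries m i)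
      simpa using this
    have h2 : i ≤ d := le_trans (le_of_not_gt hmi) (le_trans (Polynomial.le_natDegree_of_mem_supp m hm) h)
    exact Dle_mono h2 h1

lemma dle_coeff_substZY {p : Bzy} {d : ℕ} (h : Dle d p) (i : ℕ) :
    Dle d (PowerSeries.coeff (R := Bzy) i (substZY p)) := by
  have hs : substZY p = p.sum fun n a => substY a * (PowerSeries.C (R := Bzy) Polynomial.X) ^ n := by
    simp [substZY, Polynomial.eval₂_eq_sum]
  rw [hs, Polynomial.sum_def, map_sum]
  refine Dle_sum _ _ fun n _ => ?_
  have : PowerSeries.coeff (R := Bzy) i (substY (p.coeff n) * (PowerSeries.C (R := Bzy) Polynomial.X) ^ n) =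
      PowerSeries.coeff (R := Bzy) i (substY (p.coeff n)) * Polynomial.X ^ n := by
    rw [← map_pow, PowerSeries.coeff_mul_C]
  rw [this]
  have := Dle_mul (dle_coeff_substY (h n) i) (Dle_Xpow n)
  simpa using this

lemma substY_C (c : ℂ) : substY (Polynomial.C c) = constHom c := by
  simp [substY]

lemma coeff_constHom_eq_zero (c : ℂ) {i : ℕ} (hi : 1 ≤ i) :
    PowerSeries.coeff (R := Bzy) i (constHom c) = 0 := by
  rcases i with _ | i
  · omega
  · simp [constHom, PowerSeries.coeff_C]

end S14
end Aux

noncomputable section Aux2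
namespace S14
open Polynomial PowerSeries

lemma Dle_sub {d : ℕ} {p q : Bzy} (hp : Dle d p) (hq : Dle d q) : Dle d (p - q) := fun n => by
  rw [Polynomial.coeff_sub]
  exact (Polynomial.natDegree_sub_le _ _).trans (max_le (hp n) (hq n))

lemma Dle_XsubOne : Dle 0 ((Polynomial.X : Bzy) - 1) := Dle_sub Dle_X (Dle_one 0)

lemma constHom_eq (c : ℂ) : constHom c = PowerSeries.C (R := Bzy) (cB c) := rfl

lemma coeff_two_useries : PowerSeries.coeff (R := Bzy) 2 useries = 0 := by
  rw [useries, map_add, PowerSeries.coeff_C, show (2:ℕ) = 1 + 1 from rfl,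
    PowerSeries.coeff_succ_X_mul, PowerSeries.coeff_C]
  simp

lemma coeff_one_mul' (φ ψ : PowerSeries Bzy) :
    PowerSeries.coeff (R := Bzy) 1 (φ * ψ) =
      PowerSeries.coeff (R := Bzy) 0 φ * PowerSeries.coeff (R := Bzy) 1 ψ +
        PowerSeries.coeff (R := Bzy) 1 φ * PowerSeries.coeff (R := Bzy) 0 ψ := by
  rw [PowerSeries.coeff_mul, Finset.Nat.sum_antidiagonal_eq_sum_range_succ_mk]
  rw [Finset.sum_range_succ, Finset.sum_range_succ, Finset.sum_range_zero]
  norm_num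

lemma coeff_two_mul' (φ ψ : PowerSeries Bzy) :
    PowerSeries.coeff (R := Bzy) 2 (φ * ψ) =
      PowerSeries.coeff (R := Bzy) 0 φ * PowerSeries.coeff (R := Bzy) 2 ψ +
        (PowerSeries.coeff (R := Bzy) 1 φ * PowerSeries.coeff (R := Bzy) 1 ψ +
          PowerSeries.coeff (R := Bzy) 2 φ * PowerSeries.coeff (R := Bzy) 0 ψ) := by
  rw [PowerSeries.coeff_mul, Finset.Nat.sum_antidiagonal_eq_sum_range_succ_mk]
  rw [Finset.sum_range_succ, Finset.sum_range_succ, Finset.sum_range_succ, Finset.sum_range_zero]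
  ring

lemma key (ρ : ℝ) (P : ℕ → Bzy) (hF : FuncEq ρ P) (hI : IndepY P) :
    Dle 1 (P 1) ∧ Dle 1 (P 2) := by
  classical
  unfold FuncEq at hF
  have hP0 : Dle 0 (P 0) := fun n => by
    obtain ⟨c, hc⟩ := hI n; simp [hc]
  set A : PowerSeries Bzy := PowerSeries.mk (fun m => ∑ k ∈ Finset.range (m + 1),
      PowerSeries.coeff (R := Bzy) (m - k) (substY ((P k).coeff 0))) with hA
  set B : PowerSeries Bzy := PowerSeries.mk (fun m => ∑ k ∈ Finset.range (m + 1),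
      PowerSeries.coeff (R := Bzy) (m - k) (substZY (P k))) with hB
  set M : PowerSeries Bzy := constHom (1 - (ρ : ℂ)) + constHom (ρ : ℂ) * useries with hM
  set G : PowerSeries Bzy := PowerSeries.C (R := Bzy) (Polynomial.X - 1) * A + B with hG
  have DiagM : Diag M := Diag_add (Diag_constHom _) (Diag_mul (Diag_constHom _) Diag_useries)
  have DiagA : Diag A := fun i => by
    rw [hA, PowerSeries.coeff_mk]
    exact Dle_sum _ _ fun k _ => Dle_mono (Nat.sub_le i k) (Diag_substY _ (i - k))
  have DiagB : Diag B := fun i => by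
    rw [hB, PowerSeries.coeff_mk]
    exact Dle_sum _ _ fun k _ => Dle_mono (Nat.sub_le i k) (Diag_substZY _ (i - k))
  have DiagG : Diag G := Diag_add (Diag_mul (Diag_C Dle_XsubOne) DiagA) DiagB
  have hM2 : PowerSeries.coeff (R := Bzy) 2 M = 0 := by
    rw [hM, map_add, coeff_constHom_eq_zero _ (by norm_num), constHom_eq,
      PowerSeries.coeff_C_mul, coeff_two_useries]
    simp
  have cG : ∀ m, PowerSeries.coeff (R := Bzy) m G =
      (Polynomial.X - 1) * (∑ k ∈ Finset.range (m + 1),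
        PowerSeries.coeff (R := Bzy) (m - k) (substY ((P k).coeff 0))) +
      (∑ k ∈ Finset.range (m + 1), PowerSeries.coeff (R := Bzy) (m - k) (substZY (P k))) := fun m => by
    rw [hG, map_add, PowerSeries.coeff_C_mul, hA, hB, PowerSeries.coeff_mk, PowerSeries.coeff_mk]
  have hL : ∀ m, PowerSeries.coeff (R := Bzy) m
      (PowerSeries.C (R := Bzy) Polynomial.X * PowerSeries.mk (fun k => P k)) =
      Polynomial.X * P m := fun m => by
    rw [PowerSeries.coeff_C_mul, PowerSeries.coeff_mk]
  -- degree 1 from the q^1 coefficient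
  have e1 : Polynomial.X * P 1 =
      PowerSeries.coeff (R := Bzy) 0 M * PowerSeries.coeff (R := Bzy) 1 G +
        PowerSeries.coeff (R := Bzy) 1 M * PowerSeries.coeff (R := Bzy) 0 G := by
    rw [← hL 1, hF, coeff_one_mul']
  have hP1 : Dle 1 (P 1) := by
    have hd : Dle 1 (Polynomial.X * P 1) := by
      rw [e1]
      exact Dle_add (by simpa using Dle_mul (DiagM 0) (DiagG 1))
        (by simpa using Dle_mul (DiagM 1) (DiagG 0))
    intro n
    have h := hd (n + 1)
    rwa [Polynomial.coeff_X_mul] at h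
  refine ⟨hP1, ?_⟩
  -- q^2 coefficient
  obtain ⟨c0, hc0⟩ := hI 0
  have hz : ∀ i, 1 ≤ i → PowerSeries.coeff (R := Bzy) i (substY ((P 0).coeff 0)) = 0 := fun i hi => by
    rw [hc0, substY_C, coeff_constHom_eq_zero _ hi]
  have hG1 : Dle 0 (PowerSeries.coeff (R := Bzy) 1 G) := by
    rw [cG 1]
    simp only [Finset.sum_range_succ, Finset.sum_range_zero, zero_add, Nat.sub_zero, Nat.sub_self]
    rw [hz 1 le_rfl, zero_add]
    refine Dle_add (by simpa using Dle_mul Dle_XsubOne (Diag_substY ((P 1).coeff 0) 0)) ?_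
    exact Dle_add (dle_coeff_substZY hP0 1) (Diag_substZY (P 1) 0)
  have hG2 : Dle 1 (PowerSeries.coeff (R := Bzy) 2 G) := by
    rw [cG 2]
    simp only [Finset.sum_range_succ, Finset.sum_range_zero, zero_add, Nat.sub_zero,
      Nat.sub_self, show (2 : ℕ) - 1 = 1 from rfl]
    rw [hz 2 (by norm_num), zero_add]
    refine Dle_add ?_ ?_
    · have hh := Dle_mul Dle_XsubOne (Dle_add (dle_coeff_substY (hP1 0) 1)
        (Dle_mono (Nat.zero_le 1) (Diag_substY ((P 2).coeff 0) 0)))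
      simpa using hh
    · exact Dle_add (Dle_add (Dle_mono (Nat.zero_le 1) (dle_coeff_substZY hP0 2)) (dle_coeff_substZY hP1 1))
        (Dle_mono (Nat.zero_le 1) (Diag_substZY (P 2) 0))
  have e2 : Polynomial.X * P 2 =
      PowerSeries.coeff (R := Bzy) 0 M * PowerSeries.coeff (R := Bzy) 2 G +
        (PowerSeries.coeff (R := Bzy) 1 M * PowerSeries.coeff (R := Bzy) 1 G +
          PowerSeries.coeff (R := Bzy) 2 M * PowerSeries.coeff (R := Bzy) 0 G) := by
    rw [← hL 2, hF, coeff_two_mul']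
  have hd : Dle 1 (Polynomial.X * P 2) := by
    rw [e2, hM2]
    refine Dle_add (by simpa using Dle_mul (DiagM 0) hG2) ?_
    refine Dle_add (by simpa using Dle_mul (DiagM 1) hG1) ?_
    simpa using Dle_zero 1
  intro n
  have h := hd (n + 1)
  rwa [Polynomial.coeff_X_mul] at h

-- Part 3: from Dle 1 to vanishing of aCoef
lemma coeff_divByMonic_X (p : Bzy) (n : ℕ) : (p /ₘ Polynomial.X).coeff n = p.coeff (n + 1) := by
  conv_rhs => rw [← Polynomial.modByMonic_add_div p Polynomial.X]
  rw [Polynomial.coeff_add, Polynomial.coeff_X_mul]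
  have h : (p %ₘ Polynomial.X).coeff (n + 1) = 0 := by
    apply Polynomial.coeff_eq_zero_of_degree_lt
    refine lt_of_lt_of_le (Polynomial.degree_modByMonic_lt p Polynomial.monic_X) ?_
    rw [Polynomial.degree_X]
    exact_mod_cast Nat.succ_le_succ (Nat.zero_le n)
  rw [h, zero_add]

lemma Dle_bracket {P : ℕ → Bzy} {k : ℕ} (h : Dle 1 (P k)) : Dle 1 (bracket P k) := by
  intro n
  rw [bracket, Polynomial.coeff_add, coeff_divByMonic_X, Polynomial.coeff_sub]
  refine (Polynomial.natDegree_add_le _ _).trans (max_le ?_ ?_)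
  · rw [Polynomial.coeff_C]
    split_ifs with h0
    · exact (h 0).trans (by norm_num)
    · simp
  · refine (Polynomial.natDegree_sub_le _ _).trans (max_le (h (n + 1)) ?_)
    rw [Polynomial.coeff_C]
    simp
  
lemma coeff_dy (p : Bzy) (n : ℕ) : (dy p).coeff n = Polynomial.derivative (p.coeff n) := by
  rw [dy, Polynomial.coeff_sum, Polynomial.sum_def]
  have h : ∀ m ∈ p.support,
      (Polynomial.C (Polynomial.derivative (p.coeff m)) * Polynomial.X ^ m).coeff n =
        if m = n then Polynomial.derivative (p.coeff m) else 0 := fun m _ => by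
    rw [Polynomial.C_mul_X_pow_eq_monomial, Polynomial.coeff_monomial]
  rw [Finset.sum_congr rfl h, Finset.sum_ite_eq' p.support n _]
  by_cases hn : n ∈ p.support
  · simp [hn]
  · simp [hn, Polynomial.notMem_support_iff.mp hn]

lemma dy_dy_eq_zero {p : Bzy} (h : Dle 1 p) : dy (dy p) = 0 := by
  ext1 n
  rw [coeff_dy, coeff_dy]
  have h0 : (Polynomial.derivative (p.coeff n)).natDegree = 0 :=
    Nat.le_zero.mp ((Polynomial.natDegree_derivative_le _).trans (by
      have := h n; omega))
  obtain ⟨c, hc⟩ := Polynomial.natDegree_eq_zero.mp h0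
  rw [← hc, Polynomial.derivative_C]
  simp

lemma dy_iter_zero {p : Bzy} (h : Dle 1 p) {j : ℕ} (hj : 2 ≤ j) : (dy^[j]) p = 0 := by
  obtain ⟨t, rfl⟩ : ∃ t, j = t + 2 := ⟨j - 2, by omega⟩
  rw [Function.iterate_add_apply]
  have h2 : dy^[2] p = 0 := by
    rw [show (2 : ℕ) = 1 + 1 from rfl, Function.iterate_add_apply]
    simpa using dy_dy_eq_zero h
  have hz : dy (0 : Bzy) = 0 := by simp [dy]
  rw [h2]
  exact Function.iterate_fixed hz t

lemma aCoef_eq_zero {P : ℕ → Bzy} {k : ℕ} (h : Dle 1 (P k)) {j : ℕ} (hj : 2 ≤ j) :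
    aCoef P j k = 0 := by
  rw [aCoef, dy_iter_zero (Dle_bracket h) hj, Polynomial.eval₂_zero]

end S14
end Aux2

theorem stmt14 (ρ : ℝ) (hρ : ρ ∈ Set.Ioo (0 : ℝ) 1) (P : ℕ → Bzy)
    (hF : FuncEq ρ P) (hI : IndepY P) (hB : Boundary ρ P) :
    ∀ j : ℕ, 3 ≤ j → Acoef ρ P j (j + 1) = 0 ∧ Acoef ρ P j (j + 2) = 0 := by
  obtain ⟨hP1, hP2⟩ := S14.key ρ P hF hI
  intro j hj
  constructor
  · rw [Acoef, if_pos ⟨by omega, by omega⟩, show j + 1 - j = 1 by omega,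
      S14.aCoef_eq_zero hP1 (show 2 ≤ j - 1 by omega), S14.aCoef_eq_zero hP1 (show 2 ≤ j by omega)]
    ring
  · rw [Acoef, if_pos ⟨by omega, by omega⟩, show j + 2 - j = 2 by omega,
      S14.aCoef_eq_zero hP2 (show 2 ≤ j - 1 by omega), S14.aCoef_eq_zero hP2 (show 2 ≤ j by omega)]
    ring
end

section
/- Under the assumptions on F, for all integers k, l ≥ 0 the function a_l^k(z) is a polynomial in z of degree at most k. -/
open scoped BigOperators

namespace Stmt15

open Polynomial

noncomputable section

abbrev K := Polynomial ℂ

/-- substitute `y ↦ z` (diagonal evaluation). -/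
def diag : Bzy →+* Bzy := Polynomial.eval₂RingHom embZ Polynomial.X

def wB : Bzy := yB - Polynomial.X

lemma embZ_coeff (s : K) (i : ℕ) : (embZ s).coeff i = Polynomial.C (s.coeff i) :=
  Polynomial.coeff_map _ _

lemma embZ_X : embZ Polynomial.X = Polynomial.X := Polynomial.map_X _

lemma embZ_C (c : ℂ) : embZ (Polynomial.C c) = cB c := Polynomial.map_C _

lemma embZ_injective : Function.Injective embZ :=
  Polynomial.map_injective _ Polynomial.C_injective

lemma coeff_dy (p : Bzy) (i : ℕ) : (dy p).coeff i = (p.coeff i).derivative := by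
  classical
  simp only [dy, Polynomial.sum, Polynomial.finset_sum_coeff,
    Polynomial.C_mul_X_pow_eq_monomial, Polynomial.coeff_monomial]
  rw [Finset.sum_ite_eq' p.support i (fun n => (p.coeff n).derivative)]
  by_cases h : i ∈ p.support
  · simp [h]
  · simp [h, Polynomial.notMem_support_iff.mp h]

lemma coeff_dy_iter (j : ℕ) (p : Bzy) (i : ℕ) :
    ((dy^[j]) p).coeff i = (⇑Polynomial.derivative)^[j] (p.coeff i) := by
  induction j generalizing p with
  | zero => rfl
  | succ j ih =>
    rw [Function.iterate_succ_apply, Function.iterate_succ_apply, ih, coeff_dy]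

lemma der_iter_add (j : ℕ) (a b : K) :
    (⇑Polynomial.derivative)^[j] (a + b) =
      (⇑Polynomial.derivative)^[j] a + (⇑Polynomial.derivative)^[j] b := by
  induction j generalizing a b with
  | zero => rfl
  | succ j ih => simp [Function.iterate_succ_apply, map_add, ih]

lemma der_iter_smul (j n : ℕ) (a : K) :
    (⇑Polynomial.derivative)^[j] (n • a) = n • (⇑Polynomial.derivative)^[j] a := by
  induction j generalizing a with
  | zero => rfl
  | succ j ih => simp [Function.iterate_succ_apply, map_nsmul, ih]

lemma der_iter_natDegree_le (j : ℕ) (a : K) :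
    ((⇑Polynomial.derivative)^[j] a).natDegree ≤ a.natDegree := by
  induction j generalizing a with
  | zero => exact le_rfl
  | succ j ih =>
    rw [Function.iterate_succ_apply]
    exact le_trans (ih _) (le_trans (Polynomial.natDegree_derivative_le a) (Nat.sub_le _ _))

lemma dy_iter_add (j : ℕ) (p q : Bzy) :
    (dy^[j]) (p + q) = (dy^[j]) p + (dy^[j]) q := by
  ext i
  simp [coeff_dy_iter, Polynomial.coeff_add, der_iter_add]

lemma dy_iter_C (j : ℕ) (a : K) :
    (dy^[j]) (Polynomial.C a) = Polynomial.C ((⇑Polynomial.derivative)^[j] a) := by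
  ext i
  simp only [coeff_dy_iter, Polynomial.coeff_C]
  split
  · rfl
  · simp [Polynomial.iterate_derivative_zero]

lemma dy_iter_monomial (j n : ℕ) (a : K) :
    (dy^[j]) (Polynomial.monomial n a) =
      Polynomial.monomial n ((⇑Polynomial.derivative)^[j] a) := by
  ext i
  simp only [coeff_dy_iter, Polynomial.coeff_monomial]
  split
  · rfl
  · simp [Polynomial.iterate_derivative_zero]

lemma der_iter_mul_X (j : ℕ) (a : K) :
    (⇑Polynomial.derivative)^[j + 1] (a * Polynomial.X) =
      Polynomial.X * (⇑Polynomial.derivative)^[j + 1] a +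
        ((j : K) + 1) * (⇑Polynomial.derivative)^[j] a := by
  induction j generalizing a with
  | zero =>
    simp [Polynomial.derivative_mul]
    ring
  | succ j ih =>
    rw [Function.iterate_succ_apply ⇑Polynomial.derivative (j + 1) (a * Polynomial.X),
      Polynomial.derivative_mul, Polynomial.derivative_X, mul_one, der_iter_add,
      ih (Polynomial.derivative a), ← Function.iterate_succ_apply,
      ← Function.iterate_succ_apply]
    push_cast
    ring

end

end Stmt15
namespace Stmt15

open Polynomial

noncomputable section

lemma substY_C (c : ℂ) : substY (Polynomial.C c) = constHom c := by
  simp [substY, Polynomial.coe_eval₂RingHom, Polynomial.eval₂_C]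

lemma substY_X : substY Polynomial.X = useries := by
  simp [substY, Polynomial.coe_eval₂RingHom, Polynomial.eval₂_X]

lemma constHom_eq (c : ℂ) : constHom c = PowerSeries.C (R := Bzy) (cB c) := rfl

lemma cB_one : cB 1 = 1 := by simp [cB]

lemma factorial_inv_succ (j : ℕ) :
    (((j+1).factorial : ℂ))⁻¹ * ((j : ℂ) + 1) = ((j.factorial : ℂ))⁻¹ := by
  have h1 : ((j.factorial : ℂ)) ≠ 0 := Nat.cast_ne_zero.mpr (Nat.factorial_ne_zero j)
  have h2 : ((j : ℂ) + 1) ≠ 0 := by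
    have := Nat.cast_ne_zero (R := ℂ).mpr (Nat.succ_ne_zero j)
    push_cast at this
    exact this
  rw [Nat.factorial_succ]
  push_cast
  field_simp

lemma cB_mul (a b : ℂ) : cB (a * b) = cB a * cB b := by simp [cB]

lemma coeff_substY (a : Polynomial ℂ) (j : ℕ) :
    PowerSeries.coeff (R := Bzy) j (substY a) =
      cB ((j.factorial : ℂ))⁻¹ * wB ^ j * embZ ((⇑Polynomial.derivative)^[j] a) := by
  induction a using Polynomial.induction_on generalizing j with
  | C c =>
    rw [substY_C, constHom_eq, PowerSeries.coeff_C]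
    cases j with
    | zero => simp [embZ_C, cB_one]
    | succ j =>
      rw [Function.iterate_succ_apply, Polynomial.derivative_C,
        Polynomial.iterate_derivative_zero]
      simp
  | add p q hp hq =>
    rw [map_add, map_add, der_iter_add, map_add, hp, hq]
    ring
  | monomial n c h =>
    rw [show Polynomial.C c * Polynomial.X ^ (n+1) =
      (Polynomial.C c * Polynomial.X ^ n) * Polynomial.X by ring]
    rw [map_mul, substY_X]
    set b := Polynomial.C c * Polynomial.X ^ n with hb
    have huse : useries = PowerSeries.C (R := Bzy) Polynomial.X +
        PowerSeries.X * PowerSeries.C (R := Bzy) wB := rfl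
    cases j with
    | zero =>
      rw [huse, mul_add, map_add, mul_comm PowerSeries.X (PowerSeries.C (R := Bzy) wB),
        ← mul_assoc, PowerSeries.coeff_zero_mul_X, PowerSeries.coeff_mul_C, h 0]
      simp only [Function.iterate_zero_apply, add_zero, Nat.factorial_zero, pow_zero]
      have hb2 : embZ (b * Polynomial.X) = embZ b * Polynomial.X := by
        rw [map_mul, embZ_X]
      rw [hb2]
      ring
    | succ j =>
      rw [huse, mul_add, map_add, mul_comm PowerSeries.X (PowerSeries.C (R := Bzy) wB),
        ← mul_assoc, PowerSeries.coeff_mul_C, PowerSeries.coeff_succ_mul_X,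
        PowerSeries.coeff_mul_C, h (j+1), h j, der_iter_mul_X j b]
      have hb3 : embZ (Polynomial.X * (⇑Polynomial.derivative)^[j+1] b +
          ((j : Polynomial ℂ) + 1) * (⇑Polynomial.derivative)^[j] b) =
          Polynomial.X * embZ ((⇑Polynomial.derivative)^[j+1] b) +
            cB ((j : ℂ) + 1) * embZ ((⇑Polynomial.derivative)^[j] b) := by
        have hcB : cB ((j : ℂ) + 1) = (j : Bzy) + 1 := by
          rw [cB, map_add, map_one, map_natCast, map_add, map_one, map_natCast]
        rw [map_add, map_mul, map_mul, embZ_X, hcB, map_add, map_one, map_natCast]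
      rw [hb3]
      have : cB ((j.factorial : ℂ))⁻¹ = cB (((j+1).factorial : ℂ))⁻¹ * cB ((j:ℂ)+1) := by
        rw [← cB_mul, factorial_inv_succ]
      rw [this]
      ring

lemma coeff_substZY (p : Bzy) (j : ℕ) :
    PowerSeries.coeff (R := Bzy) j (substZY p) =
      cB ((j.factorial : ℂ))⁻¹ * wB ^ j * diag ((dy^[j]) p) := by
  induction p using Polynomial.induction_on' with
  | add p q hp hq =>
    rw [map_add, map_add, dy_iter_add, map_add, hp, hq]
    ring
  | monomial n a =>
    have h1 : substZY (Polynomial.monomial n a) =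
        substY a * (PowerSeries.C (R := Bzy) Polynomial.X) ^ n := by
      simp [substZY, Polynomial.coe_eval₂RingHom, Polynomial.eval₂_monomial]
    rw [h1, ← map_pow, PowerSeries.coeff_mul_C, coeff_substY, dy_iter_monomial]
    have h2 : diag (Polynomial.monomial n ((⇑Polynomial.derivative)^[j] a)) =
        embZ ((⇑Polynomial.derivative)^[j] a) * Polynomial.X ^ n := by
      simp [diag, Polynomial.coe_eval₂RingHom, Polynomial.eval₂_monomial]
    rw [h2]
    ring

lemma diag_X : diag Polynomial.X = Polynomial.X := by
  simp [diag, Polynomial.coe_eval₂RingHom]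

lemma diag_C (a : Polynomial ℂ) : diag (Polynomial.C a) = embZ a := by
  simp [diag, Polynomial.coe_eval₂RingHom]

lemma diag_yB : diag yB = Polynomial.X := by
  rw [yB, diag_C, embZ_X]

lemma diag_wB : diag wB = 0 := by
  rw [wB, map_sub, diag_yB, diag_X, sub_self]

lemma diag_cB (c : ℂ) : diag (cB c) = cB c := by
  rw [cB, diag_C, embZ_C]
  rfl

lemma diag_embZ (s : Polynomial ℂ) : diag (embZ s) = embZ s := by
  induction s using Polynomial.induction_on' with
  | add p q hp hq => rw [map_add, map_add, hp, hq]
  | monomial n a =>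
    have h1 : embZ (Polynomial.monomial n a) = cB a * Polynomial.X ^ n := by
      rw [embZ, Polynomial.coe_mapRingHom, Polynomial.map_monomial,
        ← Polynomial.C_mul_X_pow_eq_monomial, cB]
    rw [h1, map_mul, map_pow, diag_cB, diag_X]

lemma embZ_aCoef (P : ℕ → Bzy) (j k : ℕ) :
    embZ (aCoef P j k) = diag ((dy^[j]) (bracket P k)) := by
  rw [aCoef, Polynomial.hom_eval₂, RingHom.comp_id, embZ_X]
  simp [diag, Polynomial.coe_eval₂RingHom]

end

end Stmt15
namespace Stmt15

open Polynomial

noncomputable section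

def alphaB (ρ : ℝ) : Bzy := cB (1 - (ρ:ℂ)) + cB (ρ:ℂ) * Polynomial.X

def betaB (ρ : ℝ) : Bzy := cB (ρ:ℂ) * wB

def gS (P : ℕ → Bzy) (m : ℕ) : Bzy :=
  ∑ k ∈ Finset.range (m+1),
    cB (((m-k).factorial : ℂ))⁻¹ * wB^(m-k) * embZ (aCoef P (m-k) k)

lemma Afact (ρ : ℝ) :
    constHom (1 - (ρ : ℂ)) + constHom (ρ : ℂ) * useries =
      PowerSeries.C (R := Bzy) (alphaB ρ) + PowerSeries.X * PowerSeries.C (R := Bzy) (betaB ρ) := by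
  rw [constHom_eq, constHom_eq, useries, alphaB, betaB]
  rw [show (yB - Polynomial.X) = wB from rfl]
  simp only [map_add, map_mul]
  ring

lemma X_mul_bracket (P : ℕ → Bzy) (k : ℕ) :
    Polynomial.X * bracket P k =
      P k + (Polynomial.X - 1) * Polynomial.C ((P k).coeff 0) := by
  have hdvd : Polynomial.X ∣ (P k - Polynomial.C ((P k).coeff 0)) :=
    Polynomial.X_dvd_iff.mpr (by simp)
  have h := Polynomial.modByMonic_add_div (P k - Polynomial.C ((P k).coeff 0))
    Polynomial.X
  rw [(Polynomial.modByMonic_eq_zero_iff_dvd Polynomial.monic_X).mpr hdvd, zero_add] at h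
  rw [bracket]
  linear_combination h

lemma substZY_X : substZY Polynomial.X = PowerSeries.C (R := Bzy) Polynomial.X := by
  simp [substZY, Polynomial.coe_eval₂RingHom]

lemma substZY_C (a : Polynomial ℂ) : substZY (Polynomial.C a) = substY a := by
  simp [substZY, Polynomial.coe_eval₂RingHom]

lemma L2series (P : ℕ → Bzy) (k : ℕ) :
    PowerSeries.C (R := Bzy) (Polynomial.X - 1) * substY ((P k).coeff 0) + substZY (P k) =
      PowerSeries.C (R := Bzy) Polynomial.X * substZY (bracket P k) := by
  have h := congrArg substZY (X_mul_bracket P k)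
  rw [map_mul, map_add, map_mul, map_sub, map_one, substZY_X, substZY_C] at h
  rw [map_sub, map_one]
  linear_combination -h

lemma Gfact (P : ℕ → Bzy) :
    (PowerSeries.C (R := Bzy) (Polynomial.X - 1) *
        PowerSeries.mk (fun m => ∑ k ∈ Finset.range (m + 1),
          PowerSeries.coeff (R := Bzy) (m - k) (substY ((P k).coeff 0))) +
      PowerSeries.mk (fun m => ∑ k ∈ Finset.range (m + 1),
        PowerSeries.coeff (R := Bzy) (m - k) (substZY (P k)))) =
    PowerSeries.C (R := Bzy) Polynomial.X * PowerSeries.mk (fun m => gS P m) := by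
  apply PowerSeries.ext
  intro m
  simp only [map_add, PowerSeries.coeff_C_mul, PowerSeries.coeff_mk]
  rw [Finset.mul_sum, ← Finset.sum_add_distrib, gS, Finset.mul_sum]
  apply Finset.sum_congr rfl
  intro k hk
  have h := congrArg (PowerSeries.coeff (R := Bzy) (m - k)) (L2series P k)
  rw [map_add, PowerSeries.coeff_C_mul, PowerSeries.coeff_C_mul] at h
  rw [h, coeff_substZY, ← embZ_aCoef]

lemma keyEq (ρ : ℝ) (P : ℕ → Bzy) (hF : FuncEq ρ P) :
    (P 0 = alphaB ρ * gS P 0) ∧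
      ∀ n : ℕ, P (n+1) = alphaB ρ * gS P (n+1) + betaB ρ * gS P n := by
  rw [FuncEq, Afact, Gfact] at hF
  have hX : (Polynomial.X : Bzy) ≠ 0 := Polynomial.X_ne_zero
  have key : ∀ m, PowerSeries.coeff (R := Bzy) m
      ((PowerSeries.C (R := Bzy) (alphaB ρ) + PowerSeries.X * PowerSeries.C (R := Bzy) (betaB ρ)) *
        (PowerSeries.C (R := Bzy) Polynomial.X * PowerSeries.mk (fun m => gS P m))) =
      PowerSeries.coeff (R := Bzy) m (PowerSeries.C (R := Bzy) Polynomial.X * PowerSeries.mk (fun k => P k)) :=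
    fun m => (congrArg (PowerSeries.coeff (R := Bzy) m) hF).symm
  have hexp : (PowerSeries.C (R := Bzy) (alphaB ρ) + PowerSeries.X * PowerSeries.C (R := Bzy) (betaB ρ)) *
      (PowerSeries.C (R := Bzy) Polynomial.X * PowerSeries.mk (fun m => gS P m)) =
      PowerSeries.C (R := Bzy) (Polynomial.X * alphaB ρ) * PowerSeries.mk (fun m => gS P m) +
        (PowerSeries.C (R := Bzy) (Polynomial.X * betaB ρ) * PowerSeries.mk (fun m => gS P m)) *
          PowerSeries.X := by
    rw [map_mul, map_mul]
    ring
  constructor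
  · have h0 := key 0
    rw [hexp, map_add, PowerSeries.coeff_C_mul, PowerSeries.coeff_C_mul,
      PowerSeries.coeff_zero_mul_X, PowerSeries.coeff_mk, PowerSeries.coeff_mk, add_zero] at h0
    apply mul_left_cancel₀ hX
    linear_combination -h0
  · intro n
    have h1 := key (n+1)
    rw [hexp, map_add, PowerSeries.coeff_C_mul, PowerSeries.coeff_C_mul,
      PowerSeries.coeff_succ_mul_X, PowerSeries.coeff_C_mul, PowerSeries.coeff_mk,
      PowerSeries.coeff_mk, PowerSeries.coeff_mk] at h1
    apply mul_left_cancel₀ hX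
    linear_combination -h1

end

end Stmt15
namespace Stmt15

open Polynomial

noncomputable section

/-- weighted degree bound: `v`-weighted z-degree plus y-degree of every coefficient is `≤ n`. -/
def TW (v n : ℕ) (p : Bzy) : Prop :=
  ∀ i, p.coeff i = 0 ∨ v * i + (p.coeff i).natDegree ≤ n

lemma TW_mono {v a b : ℕ} {p : Bzy} (h : TW v a p) (hab : a ≤ b) : TW v b p := by
  intro i
  rcases h i with h' | h'
  · exact Or.inl h'
  · exact Or.inr (le_trans h' hab)

lemma TW_zero (v n : ℕ) : TW v n 0 := fun i => Or.inl (by simp)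

lemma TW_add {v n : ℕ} {p q : Bzy} (hp : TW v n p) (hq : TW v n q) : TW v n (p + q) := by
  intro i
  rcases hp i with h1 | h1
  · rcases hq i with h2 | h2
    · exact Or.inl (by rw [Polynomial.coeff_add, h1, h2, add_zero])
    · right
      rw [Polynomial.coeff_add, h1, zero_add]
      exact h2
  · rcases hq i with h2 | h2
    · right
      rw [Polynomial.coeff_add, h2, add_zero]
      exact h1
    · right
      rw [Polynomial.coeff_add]
      have hm : ((p.coeff i) + (q.coeff i)).natDegree ≤
          max (p.coeff i).natDegree (q.coeff i).natDegree :=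
        Polynomial.natDegree_add_le _ _
      have hmax : max (p.coeff i).natDegree (q.coeff i).natDegree ≤ n - v * i :=
        max_le (by omega) (by omega)
      have := le_trans hm hmax
      omega

lemma TW_mul {v a b : ℕ} {p q : Bzy} (hp : TW v a p) (hq : TW v b q) :
    TW v (a + b) (p * q) := by
  intro i
  rw [Polynomial.coeff_mul]
  by_cases hz : ∀ x ∈ Finset.HasAntidiagonal.antidiagonal i, p.coeff x.1 * q.coeff x.2 = 0
  · exact Or.inl (Finset.sum_eq_zero hz)
  · right
    push_neg at hz
    obtain ⟨x, hx, hxne⟩ := hz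
    have hx1 : p.coeff x.1 ≠ 0 := fun h => hxne (by rw [h, zero_mul])
    have hx2 : q.coeff x.2 ≠ 0 := fun h => hxne (by rw [h, mul_zero])
    have h1 := (hp x.1).resolve_left hx1
    have h2 := (hq x.2).resolve_left hx2
    have hxi : x.1 + x.2 = i := Finset.HasAntidiagonal.mem_antidiagonal.mp hx
    have hvi : v * i ≤ a + b := by
      have : v * i = v * x.1 + v * x.2 := by rw [← hxi, Nat.mul_add]
      omega
    have hall : ∀ y ∈ Finset.HasAntidiagonal.antidiagonal i,
        (p.coeff y.1 * q.coeff y.2).natDegree ≤ a + b - v * i := by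
      intro y hy
      by_cases hy1 : p.coeff y.1 = 0
      · simp [hy1]
      by_cases hy2 : q.coeff y.2 = 0
      · simp [hy2]
      have hd1 := (hp y.1).resolve_left hy1
      have hd2 := (hq y.2).resolve_left hy2
      have hyi : y.1 + y.2 = i := Finset.HasAntidiagonal.mem_antidiagonal.mp hy
      have := Polynomial.natDegree_mul_le (p := p.coeff y.1) (q := q.coeff y.2)
      have hv : v * i = v * y.1 + v * y.2 := by rw [← hyi, Nat.mul_add]
      omega
    have := Polynomial.natDegree_sum_le_of_forall_le _ _ hall
    omega

lemma TW_pow {v a : ℕ} {p : Bzy} (hp : TW v a p) (j : ℕ) : TW v (j * a) (p ^ j) := by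
  induction j with
  | zero =>
    intro i
    rw [pow_zero]
    rcases Nat.eq_zero_or_pos i with h | h
    · subst h
      right
      simp
    · left
      simp [Polynomial.coeff_one, h.ne']
  | succ j ih =>
    rw [pow_succ, Nat.succ_mul]
    exact TW_mul ih hp

lemma TW_sum {v n : ℕ} {s : Finset ℕ} {f : ℕ → Bzy} (h : ∀ k ∈ s, TW v n (f k)) :
    TW v n (∑ k ∈ s, f k) := by
  intro i
  rw [Polynomial.finset_sum_coeff]
  by_cases hz : ∀ k ∈ s, (f k).coeff i = 0
  · exact Or.inl (Finset.sum_eq_zero hz)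
  · right
    push_neg at hz
    obtain ⟨k, hk, hkne⟩ := hz
    have hvi : v * i ≤ n := by
      have := (h k hk i).resolve_left hkne
      omega
    have hall : ∀ k ∈ s, ((f k).coeff i).natDegree ≤ n - v * i := by
      intro k' hk'
      rcases h k' hk' i with h' | h'
      · simp [h']
      · omega
    have := Polynomial.natDegree_sum_le_of_forall_le _ _ hall
    omega

lemma TW_cB (v : ℕ) (c : ℂ) : TW v 0 (cB c) := by
  intro i
  rcases Nat.eq_zero_or_pos i with h | h
  · subst h
    right
    simp [cB]
  · left
    rw [cB]
    exact Polynomial.coeff_C_ne_zero h.ne'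

lemma TW_X (v : ℕ) : TW v v Polynomial.X := by
  intro i
  rcases eq_or_ne i 1 with h | h
  · subst h
    right
    simp
  · left
    rw [Polynomial.coeff_X, if_neg (fun hh => h hh.symm)]

lemma TW_yB (v : ℕ) : TW v 1 yB := by
  intro i
  rcases Nat.eq_zero_or_pos i with h | h
  · subst h
    right
    simp [yB, Polynomial.natDegree_X]
  · left
    rw [yB]
    exact Polynomial.coeff_C_ne_zero h.ne'

lemma TW_wB {v : ℕ} (hv : v ≤ 1) : TW v 1 wB := by
  rw [wB, sub_eq_add_neg]
  apply TW_add (TW_yB v)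
  intro i
  rcases (TW_X v) i with h | h
  · exact Or.inl (by rw [Polynomial.coeff_neg, h, neg_zero])
  · right
    rw [Polynomial.coeff_neg, Polynomial.natDegree_neg]
    omega

lemma TW_embZ {v d : ℕ} {s : Polynomial ℂ} (h : s.natDegree ≤ d) : TW v (v * d) (embZ s) := by
  intro i
  by_cases hz : s.coeff i = 0
  · exact Or.inl (by rw [embZ_coeff, hz, map_zero])
  · right
    rw [embZ_coeff, Polynomial.natDegree_C, add_zero]
    have : i ≤ s.natDegree := Polynomial.le_natDegree_of_ne_zero hz
    exact Nat.mul_le_mul_left v (le_trans this h)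

lemma TW_alphaB (ρ : ℝ) (v : ℕ) : TW v v (alphaB ρ) := by
  rw [alphaB]
  apply TW_add
  · exact TW_mono (TW_cB v _) (Nat.zero_le v)
  · have := TW_mul (TW_cB v (ρ:ℂ)) (TW_X v)
    rw [zero_add] at this
    exact this

end

end Stmt15
namespace Stmt15

open Polynomial

noncomputable section

lemma diag_alphaB (ρ : ℝ) : diag (alphaB ρ) = alphaB ρ := by
  rw [alphaB, map_add, map_mul, diag_cB, diag_cB, diag_X]

lemma diag_gS (P : ℕ → Bzy) (m : ℕ) : diag (gS P m) = embZ (aCoef P 0 m) := by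
  rw [gS, map_sum, Finset.sum_range_succ]
  have h0 : ∀ k ∈ Finset.range m,
      diag (cB (((m-k).factorial : ℂ))⁻¹ * wB^(m-k) * embZ (aCoef P (m-k) k)) = 0 := by
    intro k hk
    rw [map_mul, map_mul, map_pow, diag_wB, zero_pow, mul_zero, zero_mul]
    exact Nat.sub_ne_zero_of_lt (Finset.mem_range.mp hk)
  rw [Finset.sum_eq_zero h0, zero_add, Nat.sub_self]
  simp [map_mul, diag_cB, diag_embZ, Nat.factorial_zero, cB_one]

lemma X_sub_one_ne_zero : ((Polynomial.X : Bzy) - 1) ≠ 0 := by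
  intro h
  have h1 := congrArg (fun q : Bzy => q.coeff 1) h
  simp [Polynomial.coeff_sub, Polynomial.coeff_one] at h1

lemma a0_pin {ρ : ℝ} (hρ1 : (1:ℂ) - (ρ:ℂ) ≠ 0) {P : ℕ → Bzy} {m : ℕ} {T : Bzy}
    (hEq : P m = alphaB ρ * gS P m + T) (hT : diag T = 0) :
    Polynomial.C ((1:ℂ) - (ρ:ℂ)) * aCoef P 0 m = (P m).coeff 0 := by
  have hdiagP : diag (P m) = alphaB ρ * embZ (aCoef P 0 m) := by
    rw [hEq, map_add, hT, add_zero, map_mul, diag_gS, diag_alphaB]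
  have hbr := congrArg diag (X_mul_bracket P m)
  rw [map_mul, diag_X, map_add, map_mul, map_sub, map_one, diag_X, diag_C] at hbr
  have hbr0 : diag (bracket P m) = embZ (aCoef P 0 m) := by
    rw [embZ_aCoef]
    rfl
  rw [hbr0, hdiagP, alphaB] at hbr
  have hkey : (Polynomial.X - 1) * (cB (1 - (ρ:ℂ)) * embZ (aCoef P 0 m)) =
      (Polynomial.X - 1) * embZ ((P m).coeff 0) := by
    simp only [cB] at hbr ⊢
    rw [show (Polynomial.C (Polynomial.C ((1:ℂ) - (ρ:ℂ))) : Bzy) =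
      1 - Polynomial.C (Polynomial.C (ρ:ℂ)) by rw [map_sub, map_one, map_sub, map_one]]
      at hbr ⊢
    linear_combination hbr
  have h2 := mul_left_cancel₀ X_sub_one_ne_zero hkey
  apply embZ_injective
  rw [map_mul, embZ_C]
  exact h2

lemma TW0_embZ (s : Polynomial ℂ) : TW 0 0 (embZ s) := by
  simpa using TW_embZ (v := 0) (le_refl s.natDegree)

lemma TW_betaB {ρ : ℝ} {v : ℕ} (hv : v ≤ 1) : TW v 1 (betaB ρ) := by
  have := TW_mul (TW_cB v (ρ:ℂ)) (TW_wB hv)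
  rw [zero_add] at this
  exact this

lemma TW0_gS (P : ℕ → Bzy) (m : ℕ) : TW 0 m (gS P m) := by
  apply TW_sum
  intro k hk
  have h1 := TW_mul (TW_mul (TW_cB 0 (((m-k).factorial : ℂ))⁻¹)
    (TW_pow (TW_wB (by norm_num)) (m-k))) (TW0_embZ (aCoef P (m-k) k))
  exact TW_mono h1 (by omega)

lemma TW1_gS (P : ℕ → Bzy) (m : ℕ)
    (h : ∀ k, k ≤ m → (aCoef P (m-k) k).natDegree ≤ k) : TW 1 m (gS P m) := by
  apply TW_sum
  intro k hk
  have hk' : k ≤ m := by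
    have := Finset.mem_range.mp hk
    omega
  have h1 := TW_mul (TW_mul (TW_cB 1 (((m-k).factorial : ℂ))⁻¹)
    (TW_pow (TW_wB le_rfl) (m-k))) (TW_embZ (v := 1) (h k hk'))
  exact TW_mono h1 (by omega)

lemma natDegree_aCoef_le_of (P : ℕ → Bzy) (m : ℕ)
    (hc0 : ((P m).coeff 0).natDegree ≤ m)
    (hTD : TW 1 (m+1) (P m)) (l : ℕ) : (aCoef P l m).natDegree ≤ m := by
  set c0 := (P m).coeff 0 with hc0def
  set D := (P m - Polynomial.C c0) /ₘ Polynomial.X with hDdef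
  have hXD : Polynomial.X * D = P m - Polynomial.C c0 := by
    have h := X_mul_bracket P m
    rw [bracket] at h
    rw [hDdef, hc0def]
    linear_combination h
  have hDcoeff : ∀ i, D.coeff i = (P m).coeff (i+1) := by
    intro i
    have h := congrArg (fun q : Bzy => q.coeff (i+1)) hXD
    simpa [Polynomial.coeff_X_mul, Polynomial.coeff_sub, Polynomial.coeff_C] using h
  have hTWD : TW 1 m D := by
    intro i
    rcases hTD (i+1) with h | h
    · exact Or.inl (by rw [hDcoeff i, h])
    · right
      rw [hDcoeff i]
      omega
  have hbr : bracket P m = Polynomial.C c0 + D := rfl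
  rw [aCoef, hbr, dy_iter_add, dy_iter_C, Polynomial.eval₂_add, Polynomial.eval₂_C]
  apply le_trans (Polynomial.natDegree_add_le _ _)
  apply max_le
  · simp only [RingHom.id_apply]
    exact le_trans (der_iter_natDegree_le l c0) hc0
  · rw [Polynomial.eval₂_eq_sum, Polynomial.sum_def]
    apply Polynomial.natDegree_sum_le_of_forall_le
    intro i _
    simp only [RingHom.id_apply]
    have hmul := Polynomial.natDegree_mul_le (p := ((dy^[l]) D).coeff i)
      (q := (Polynomial.X : Polynomial ℂ)^i)
    rw [Polynomial.natDegree_X_pow] at hmul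
    rcases hTWD i with h | h
    · rw [coeff_dy_iter, h, Polynomial.iterate_derivative_zero]
      simp
    · have h1 : (((dy^[l]) D).coeff i).natDegree ≤ (D.coeff i).natDegree := by
        rw [coeff_dy_iter]
        exact der_iter_natDegree_le l _
      omega

theorem main (ρ : ℝ) (hρ : ρ ∈ Set.Ioo (0 : ℝ) 1) (P : ℕ → Bzy)
    (hF : FuncEq ρ P) : ∀ k l : ℕ, (aCoef P l k).natDegree ≤ k := by
  obtain ⟨hP0, hPS⟩ := keyEq ρ P hF
  have hρ1 : (1:ℂ) - (ρ:ℂ) ≠ 0 := by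
    have h1 : (ρ:ℂ) ≠ 1 := by
      exact_mod_cast ne_of_lt hρ.2
    exact sub_ne_zero_of_ne (Ne.symm h1)
  have hTW0 : ∀ m, TW 0 m (P m) := by
    intro m
    cases m with
    | zero =>
      rw [hP0]
      have := TW_mul (TW_alphaB ρ 0) (TW0_gS P 0)
      simpa using this
    | succ n =>
      rw [hPS n]
      apply TW_add
      · have := TW_mul (TW_alphaB ρ 0) (TW0_gS P (n+1))
        simpa using this
      · have := TW_mul (TW_betaB (ρ := ρ) (by norm_num)) (TW0_gS P n)
        exact TW_mono this (by omega)
  have hc0 : ∀ m, ((P m).coeff 0).natDegree ≤ m := by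
    intro m
    rcases hTW0 m 0 with h | h
    · rw [h]
      simp
    · simpa using h
  have ha0 : ∀ m, (aCoef P 0 m).natDegree ≤ m := by
    intro m
    have hpin : Polynomial.C ((1:ℂ) - (ρ:ℂ)) * aCoef P 0 m = (P m).coeff 0 := by
      cases m with
      | zero =>
        exact a0_pin hρ1 (T := 0) (by rw [add_zero]; exact hP0) (map_zero _)
      | succ n =>
        refine a0_pin hρ1 (T := betaB ρ * gS P n) (hPS n) ?_
        rw [map_mul, betaB, map_mul, diag_wB, mul_zero, zero_mul]
    have hdeg := congrArg Polynomial.natDegree hpin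
    rw [Polynomial.natDegree_C_mul hρ1] at hdeg
    rw [hdeg]
    exact hc0 m
  intro k
  induction k using Nat.strong_induction_on with
  | h m IH =>
    intro l
    have hTD : TW 1 (m+1) (P m) := by
      have hgs : TW 1 m (gS P m) := by
        apply TW1_gS
        intro k hk
        rcases eq_or_lt_of_le hk with h | h
        · subst h
          simpa using ha0 k
        · exact IH k h (m - k)
      cases m with
      | zero =>
        rw [hP0]
        exact TW_mono (TW_mul (TW_alphaB ρ 1) hgs) (by omega)
      | succ n =>
        rw [hPS n]
        apply TW_add
        · exact TW_mono (TW_mul (TW_alphaB ρ 1) hgs) (by omega)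
        · have hgs' : TW 1 n (gS P n) := by
            apply TW1_gS
            intro k hk
            exact IH k (by omega) (n - k)
          exact TW_mono (TW_mul (TW_betaB (ρ := ρ) le_rfl) hgs') (by omega)
    exact natDegree_aCoef_le_of P m (hc0 m) hTD l

end

end Stmt15


theorem stmt15 (ρ : ℝ) (hρ : ρ ∈ Set.Ioo (0 : ℝ) 1) (P : ℕ → Bzy)
    (hF : FuncEq ρ P) (hI : IndepY P) (hB : Boundary ρ P) :
    ∀ k l : ℕ, (aCoef P l k).natDegree ≤ k :=
  Stmt15.main ρ hρ P hF
end

section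
/- Under the assumptions on F, let C = max{e², 2/(1−ρ)}. Then for all integers k, l, m ≥ 0 and all complex z with |z| ≤ 1, the m-th derivative of a_l^k satisfies |(d^m/dz^m) a_l^k(z)| ≤ C^k. -/
open scoped BigOperators

noncomputable def Complex.abs : AbsoluteValue ℂ ℝ where
  toFun := fun z => ‖z‖
  map_mul' := norm_mul
  nonneg' := norm_nonneg
  eq_zero' _ := norm_eq_zero
  add_le' := norm_add_le

lemma Complex.abs_natCast (n : ℕ) : Complex.abs n = n := Complex.norm_natCast n

lemma Complex.abs_ofReal (r : ℝ) : Complex.abs r = |r| := by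
  show ‖(r:ℂ)‖ = |r|
  rw [Complex.norm_real, Real.norm_eq_abs]

namespace S16
open Polynomial Finset

noncomputable def phi (j : ℕ) (Q : Bzy) : Polynomial ℂ :=
  Q.sum fun n a => Polynomial.hasseDeriv j a * Polynomial.X ^ n

lemma phi_monomial (j n : ℕ) (a : Polynomial ℂ) :
    phi j (monomial n a) = hasseDeriv j a * X ^ n := by
  unfold phi
  rw [Polynomial.sum_monomial_index]
  simp

lemma phi_add (j : ℕ) (A B : Bzy) : phi j (A + B) = phi j A + phi j B := by
  unfold phi
  exact Polynomial.sum_add_index A B _ (fun i => by simp)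
    (fun a b₁ b₂ => by rw [map_add, add_mul])

lemma phi_zero (j : ℕ) : phi j (0 : Bzy) = 0 := Polynomial.sum_zero_index _

lemma phi_sub (j : ℕ) (A B : Bzy) : phi j (A - B) = phi j A - phi j B := by
  have h := phi_add j (A - B) B
  rw [sub_add_cancel] at h
  rw [h]; ring

lemma phi_sum {ι : Type*} (j : ℕ) (s : Finset ι) (f : ι → Bzy) :
    phi j (∑ i ∈ s, f i) = ∑ i ∈ s, phi j (f i) := by
  classical
  induction s using Finset.induction_on with
  | empty => simp [phi_zero]
  | insert _ _ h ih => rw [Finset.sum_insert h, Finset.sum_insert h, phi_add, ih]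

lemma phi_X_mul (j : ℕ) (Q : Bzy) : phi j (X * Q) = X * phi j Q := by
  induction Q using Polynomial.induction_on' with
  | add p q hp hq => rw [mul_add, phi_add, hp, hq, phi_add, mul_add]
  | monomial n a => rw [X_mul_monomial, phi_monomial, phi_monomial, pow_succ]; ring

lemma phi_Xpow_mul (j n : ℕ) (Q : Bzy) : phi j (X ^ n * Q) = X ^ n * phi j Q := by
  induction n with
  | zero => simp
  | succ n ih =>
    have h : X ^ (n+1) * Q = X * (X ^ n * Q) := by ring
    rw [h, phi_X_mul, ih, pow_succ]; ring

lemma phi_cB_mul (j : ℕ) (c : ℂ) (Q : Bzy) : phi j (cB c * Q) = C c * phi j Q := by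
  induction Q using Polynomial.induction_on' with
  | add p q hp hq => rw [mul_add, phi_add, hp, hq, phi_add, mul_add]
  | monomial n a =>
    show phi j (Polynomial.C (Polynomial.C c) * monomial n a) = _
    rw [C_mul_monomial, phi_monomial, phi_monomial]
    have h : hasseDeriv j (Polynomial.C c * a) = Polynomial.C c * hasseDeriv j a := by
      rw [← Polynomial.smul_eq_C_mul, map_smul, Polynomial.smul_eq_C_mul]
    rw [h]; ring

lemma phi_C (j : ℕ) (p : Polynomial ℂ) : phi j (Polynomial.C p : Bzy) = hasseDeriv j p := by
  rw [← Polynomial.monomial_zero_left, phi_monomial, pow_zero, mul_one]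

lemma phi_one (j : ℕ) : phi j (1 : Bzy) = if j = 0 then 1 else 0 := by
  have h : (1 : Bzy) = Polynomial.C (Polynomial.C 1) := by simp
  rw [h, phi_C]
  rcases Nat.eq_zero_or_pos j with hj | hj
  · subst hj; simp
  · rw [hasseDeriv_C j _ hj, if_neg (by omega)]

lemma phi_embZ_mul (j : ℕ) (r : Polynomial ℂ) (Q : Bzy) :
    phi j (embZ r * Q) = r * phi j Q := by
  induction r using Polynomial.induction_on' with
  | add p q hp hq => rw [map_add, add_mul, phi_add, hp, hq, add_mul]
  | monomial n c =>
    have h : embZ (monomial n c) = cB c * X ^ n := by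
      show Polynomial.map _ (monomial n c) = _
      rw [Polynomial.map_monomial, ← Polynomial.C_mul_X_pow_eq_monomial]
      rfl
    rw [h, mul_assoc, phi_cB_mul, phi_Xpow_mul, ← Polynomial.C_mul_X_pow_eq_monomial]
    ring

lemma hasse_X_mul (j : ℕ) (p : Polynomial ℂ) :
    hasseDeriv (j+1) (X * p) = X * hasseDeriv (j+1) p + hasseDeriv j p := by
  ext n
  rw [hasseDeriv_coeff, coeff_add]
  have hL : (X * p).coeff (n + (j+1)) = p.coeff (n + j) := by
    have : n + (j+1) = (n+j) + 1 := by omega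
    rw [this, coeff_X_mul]
  rw [hL]
  cases n with
  | zero =>
    rw [Polynomial.mul_coeff_zero, Polynomial.coeff_X_zero, zero_mul, zero_add,
      hasseDeriv_coeff]
    simp
  | succ m =>
    rw [coeff_X_mul, hasseDeriv_coeff, hasseDeriv_coeff]
    have h1 : m + (j+1) = (m + j) + 1 := by omega
    have h2 : m + 1 + j = (m + j) + 1 := by omega
    rw [h1, h2]
    have h3 : m + 1 + (j+1) = m + j + 1 + 1 := by omega
    rw [h3]
    have hp : (m+j+1+1).choose (j+1) = (m+j+1).choose j + (m+j+1).choose (j+1) :=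
      Nat.choose_succ_succ (m+j+1) j
    have hc : ((m + j + 1 + 1).choose (j + 1) : ℂ) =
        ((m + j + 1).choose j : ℂ) + ((m + j + 1).choose (j+1) : ℂ) := by
      exact_mod_cast congrArg (Nat.cast : ℕ → ℂ) hp
    rw [hc]
    ring

lemma phi_succ_yB_mul (j : ℕ) (Q : Bzy) :
    phi (j+1) (yB * Q) = X * phi (j+1) Q + phi j Q := by
  induction Q using Polynomial.induction_on' with
  | add p q hp hq =>
    rw [mul_add, phi_add, hp, hq, phi_add, phi_add]; ring
  | monomial n a =>
    show phi (j+1) (Polynomial.C Polynomial.X * monomial n a) = _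
    rw [C_mul_monomial, phi_monomial, phi_monomial, phi_monomial, hasse_X_mul]
    ring

lemma phi_zero_yB_mul (Q : Bzy) : phi 0 (yB * Q) = X * phi 0 Q := by
  induction Q using Polynomial.induction_on' with
  | add p q hp hq => rw [mul_add, phi_add, hp, hq, phi_add]; ring
  | monomial n a =>
    show phi 0 (Polynomial.C Polynomial.X * monomial n a) = _
    rw [C_mul_monomial, phi_monomial, phi_monomial]
    simp only [hasseDeriv_zero, LinearMap.id_coe, id_eq]
    ring

lemma phi_succ_yBX_mul (j : ℕ) (Q : Bzy) :
    phi (j+1) ((yB - X) * Q) = phi j Q := by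
  have h : (yB - X) * Q = yB * Q - X * Q := by ring
  rw [h, phi_sub, phi_succ_yB_mul, phi_X_mul]; ring

lemma phi_zero_yBX_mul (Q : Bzy) : phi 0 ((yB - X) * Q) = 0 := by
  have h : (yB - X) * Q = yB * Q - X * Q := by ring
  rw [h, phi_sub, phi_zero_yB_mul, phi_X_mul]; ring

lemma phi_pow_embZ (i : ℕ) (j : ℕ) (r : Polynomial ℂ) :
    phi j ((yB - X) ^ i * embZ r) = if i = j then r else 0 := by
  induction i generalizing j with
  | zero =>
    rw [pow_zero, one_mul]
    have := phi_embZ_mul j r 1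
    rw [mul_one, phi_one] at this
    rw [this]
    rcases Nat.eq_zero_or_pos j with hj | hj
    · subst hj; simp
    · rw [if_neg (by omega), if_neg (by omega), mul_zero]
  | succ i ih =>
    have h : (yB - X) ^ (i+1) * embZ r = (yB - X) * ((yB - X) ^ i * embZ r) := by ring
    rw [h]
    cases j with
    | zero => rw [phi_zero_yBX_mul, if_neg (by omega)]
    | succ j =>
      rw [phi_succ_yBX_mul, ih j]
      by_cases hij : i = j
      · rw [if_pos hij, if_pos (by omega)]
      · rw [if_neg hij, if_neg (by omega)]

end S16
namespace S16
open Polynomial Finset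

noncomputable def ahat (P : ℕ → Bzy) (j k : ℕ) : Polynomial ℂ := phi j (bracket P k)
noncomputable def alpha (P : ℕ → Bzy) (j k : ℕ) : ℂ := (ahat P j k).coeff 0
noncomputable def c0 (P : ℕ → Bzy) (n : ℕ) : Polynomial ℂ := (P n).coeff 0
noncomputable def SB (P : ℕ → Bzy) (m : ℕ) : Bzy :=
  ∑ k ∈ Finset.range (m+1), (yB - X)^(m-k) * embZ (ahat P (m-k) k)
noncomputable def linB (ρ : ℝ) : Bzy := cB (1 - (ρ:ℂ)) + cB (ρ:ℂ) * X
noncomputable def wB (ρ : ℝ) : Bzy := cB (ρ:ℂ) * (yB - X)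
noncomputable def lam (ρ : ℝ) : Polynomial ℂ := C (1 - (ρ:ℂ)) + C (ρ:ℂ) * X
noncomputable def T (P : ℕ → Bzy) (m : ℕ) : Polynomial ℂ :=
  ∑ k ∈ Finset.range (m+1), X^(m-k) * C (alpha P (m-k) k)

lemma constHom_eq (c : ℂ) : constHom c = PowerSeries.C (R := Bzy) (cB c) := rfl

lemma natCast_Bzy (m : ℕ) : ((m : ℕ) : Bzy) = cB (m : ℂ) := by
  unfold cB
  rw [← Polynomial.C_eq_natCast, ← Polynomial.C_eq_natCast]

lemma cB_mul (a b : ℂ) : cB (a*b) = cB a * cB b := by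
  unfold cB; rw [map_mul, map_mul]

lemma coeff_C_mul_X_pow (r : Bzy) (s i : ℕ) :
    (PowerSeries.coeff (R := Bzy) i) (PowerSeries.C (R := Bzy) r * PowerSeries.X ^ s) =
      if i = s then r else 0 := by
  rw [PowerSeries.coeff_C_mul, PowerSeries.coeff_X_pow, mul_ite, mul_one, mul_zero]

lemma coeff_useries_pow (n i : ℕ) :
    (PowerSeries.coeff (R := Bzy) i) (useries ^ n) =
      cB ((n.choose i : ℕ) : ℂ) * X^(n-i) * (yB - X)^i := by
  have hu : useries = PowerSeries.C (R := Bzy) X + PowerSeries.X * PowerSeries.C (R := Bzy) (yB - X) := rfl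
  rw [hu, add_pow, map_sum]
  have hterm : ∀ m, (PowerSeries.C (R := Bzy) X) ^ m *
        (PowerSeries.X * PowerSeries.C (R := Bzy) (yB - X)) ^ (n - m) *
          ((n.choose m : ℕ) : PowerSeries Bzy)
      = PowerSeries.C (R := Bzy) (cB ((n.choose m : ℕ) : ℂ) * X ^ m * (yB - X) ^ (n-m)) *
          PowerSeries.X ^ (n - m) := by
    intro m
    have e1 : ((n.choose m : ℕ) : PowerSeries Bzy)
        = PowerSeries.C (R := Bzy) (cB ((n.choose m : ℕ) : ℂ)) := by
      rw [← natCast_Bzy, map_natCast]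
    rw [mul_pow, ← map_pow, ← map_pow, e1, map_mul, map_mul]
    ring
  rw [Finset.sum_congr rfl (fun m _ => by rw [hterm m, coeff_C_mul_X_pow])]
  rcases le_or_gt i n with hin | hin
  · rw [Finset.sum_eq_single (n - i)]
    · rw [if_pos (by omega), show n - (n - i) = i by omega, Nat.choose_symm hin]
    · intro b hb hbne
      rw [if_neg (by simp only [Finset.mem_range] at hb; omega)]
    · intro h
      exact absurd (Finset.mem_range.2 (by omega)) h
  · rw [Finset.sum_eq_zero, Nat.choose_eq_zero_of_lt hin]
    · simp [cB]
    · intro b hb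
      rw [if_neg (by simp only [Finset.mem_range] at hb; omega)]

lemma coeff_substY (p : Polynomial ℂ) (i : ℕ) :
    (PowerSeries.coeff (R := Bzy) i) (substY p) = (yB - X)^i * embZ (hasseDeriv i p) := by
  induction p using Polynomial.induction_on' with
  | add p q hp hq => rw [map_add, map_add, map_add, map_add, mul_add, hp, hq]
  | monomial n c =>
    have h1 : substY (monomial n c) = constHom c * useries ^ n := Polynomial.eval₂_monomial _ _
    rw [h1, constHom_eq, PowerSeries.coeff_C_mul, coeff_useries_pow, hasseDeriv_monomial]
    have h2 : embZ (monomial (n-i) ((n.choose i : ℂ) * c)) =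
        cB ((n.choose i : ℕ) : ℂ) * cB c * X^(n-i) := by
      show Polynomial.map _ _ = _
      rw [Polynomial.map_monomial, ← Polynomial.C_mul_X_pow_eq_monomial]
      have : (Polynomial.C ((n.choose i : ℂ) * c) : Polynomial ℂ) =
          Polynomial.C ((n.choose i : ℂ)) * Polynomial.C c := map_mul _ _ _
      rw [this]
      show Polynomial.C (Polynomial.C _ * Polynomial.C _) * _ = _
      rw [map_mul]
      push_cast
      rfl
    rw [h2]
    ring
end S16
namespace S16
open Polynomial Finset

lemma substZY_X : substZY X = PowerSeries.C (R := Bzy) X := Polynomial.eval₂_X _ _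

lemma substZY_C (p : Polynomial ℂ) : substZY (Polynomial.C p) = substY p :=
  Polynomial.eval₂_C _ _

lemma coeff_substZY (Q : Bzy) (i : ℕ) :
    (PowerSeries.coeff (R := Bzy) i) (substZY Q) = (yB - X)^i * embZ (phi i Q) := by
  induction Q using Polynomial.induction_on' with
  | add p q hp hq => rw [map_add, map_add, phi_add, map_add, mul_add, hp, hq]
  | monomial n a =>
    have h1 : substZY (monomial n a) = substY a * (PowerSeries.C (R := Bzy) X) ^ n :=
      Polynomial.eval₂_monomial _ _
    rw [h1, ← map_pow, PowerSeries.coeff_mul_C, coeff_substY, phi_monomial, map_mul, map_pow]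
    have hX : embZ X = X := Polynomial.map_X _
    rw [hX]
    ring

lemma bracket_key (P : ℕ → Bzy) (k : ℕ) :
    X * bracket P k = P k + (X - 1) * Polynomial.C ((P k).coeff 0) := by
  unfold bracket
  have hdvd : X * ((P k - Polynomial.C ((P k).coeff 0)) /ₘ X)
      = P k - Polynomial.C ((P k).coeff 0) := by
    have h := Polynomial.modByMonic_add_div (P k - Polynomial.C ((P k).coeff 0))
      (X : Bzy)
    have hm : (P k - Polynomial.C ((P k).coeff 0)) %ₘ X = 0 := by
      rw [Polynomial.modByMonic_X]
      have he : Polynomial.eval 0 (P k - Polynomial.C ((P k).coeff 0)) = 0 := by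
        rw [Polynomial.eval_sub, Polynomial.eval_C, ← Polynomial.coeff_zero_eq_eval_zero,
          sub_self]
      rw [he, Polynomial.C_0]
    rw [hm, zero_add] at h
    exact h
  rw [mul_add, hdvd]
  ring

lemma funcEq_coeff {ρ : ℝ} {P : ℕ → Bzy} (hF : FuncEq ρ P) (n : ℕ) :
    P n = (PowerSeries.coeff (R := Bzy) n)
      ((PowerSeries.C (R := Bzy) (linB ρ) + PowerSeries.X * PowerSeries.C (R := Bzy) (wB ρ)) *
        PowerSeries.mk (fun m => SB P m)) := by
  have hG : constHom (1 - (ρ:ℂ)) + constHom (ρ:ℂ) * useries =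
      PowerSeries.C (R := Bzy) (linB ρ) + PowerSeries.X * PowerSeries.C (R := Bzy) (wB ρ) := by
    rw [constHom_eq, constHom_eq, show useries =
      PowerSeries.C (R := Bzy) X + PowerSeries.X * PowerSeries.C (R := Bzy) (yB - X) from rfl]
    unfold linB wB
    simp only [map_add, map_mul, map_sub]
    ring
  have hMk : (PowerSeries.C (R := Bzy) (Polynomial.X - 1) *
          PowerSeries.mk (fun m => ∑ k ∈ Finset.range (m + 1),
            PowerSeries.coeff (R := Bzy) (m - k) (substY ((P k).coeff 0))) +
        PowerSeries.mk (fun m => ∑ k ∈ Finset.range (m + 1),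
          PowerSeries.coeff (R := Bzy) (m - k) (substZY (P k)))) =
      PowerSeries.C (R := Bzy) Polynomial.X * PowerSeries.mk (fun m => SB P m) := by
    apply PowerSeries.ext
    intro m
    rw [map_add, PowerSeries.coeff_C_mul, PowerSeries.coeff_C_mul,
      PowerSeries.coeff_mk, PowerSeries.coeff_mk, PowerSeries.coeff_mk]
    unfold SB
    rw [Finset.mul_sum, Finset.mul_sum]
    rw [← Finset.sum_add_distrib]
    refine Finset.sum_congr rfl fun k _ => ?_
    have key : PowerSeries.coeff (R := Bzy) (m-k) (substZY (X * bracket P k)) =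
        X * ((yB - X)^(m-k) * embZ (ahat P (m-k) k)) := by
      rw [map_mul, substZY_X, PowerSeries.coeff_C_mul, coeff_substZY]
      rfl
    have key2 : substZY (X * bracket P k) =
        substZY (P k) + (PowerSeries.C (R := Bzy) (Polynomial.X - 1)) * substY ((P k).coeff 0) := by
      rw [bracket_key, map_add, map_mul]
      have e1 : substZY (X - 1) = PowerSeries.C (R := Bzy) (X - 1) := by
        rw [map_sub, substZY_X, map_one, map_sub, map_one]
      rw [e1, substZY_C]
    rw [key2, map_add, PowerSeries.coeff_C_mul] at key
    rw [← key]
    ring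
  unfold FuncEq at hF
  rw [hG, hMk] at hF
  have hFF : PowerSeries.C (R := Bzy) Polynomial.X * PowerSeries.mk (fun k => P k) =
      PowerSeries.C (R := Bzy) Polynomial.X *
        ((PowerSeries.C (R := Bzy) (linB ρ) + PowerSeries.X * PowerSeries.C (R := Bzy) (wB ρ)) *
          PowerSeries.mk (fun m => SB P m)) := by
    rw [hF]; ring
  have hco := congrArg (PowerSeries.coeff (R := Bzy) n) hFF
  rw [PowerSeries.coeff_C_mul, PowerSeries.coeff_C_mul, PowerSeries.coeff_mk] at hco
  exact mul_left_cancel₀ (Polynomial.X_ne_zero) hco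

lemma hP0 {ρ : ℝ} {P : ℕ → Bzy} (hF : FuncEq ρ P) : P 0 = linB ρ * SB P 0 := by
  have h := funcEq_coeff hF 0
  rw [add_mul, map_add, PowerSeries.coeff_C_mul, PowerSeries.coeff_mk] at h
  have hz : PowerSeries.coeff (R := Bzy) 0 (PowerSeries.X * (PowerSeries.C (R := Bzy) (wB ρ) *
      PowerSeries.mk (fun m => SB P m))) = 0 := by
    rw [PowerSeries.coeff_zero_eq_constantCoeff, map_mul, PowerSeries.constantCoeff_X,
      zero_mul]
  rw [mul_assoc, hz, add_zero] at h
  exact h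

lemma hPS {ρ : ℝ} {P : ℕ → Bzy} (hF : FuncEq ρ P) (n : ℕ) :
    P (n+1) = linB ρ * SB P (n+1) + wB ρ * SB P n := by
  have h := funcEq_coeff hF (n+1)
  rw [add_mul, map_add, PowerSeries.coeff_C_mul, PowerSeries.coeff_mk, mul_assoc,
    PowerSeries.coeff_succ_X_mul, PowerSeries.coeff_C_mul, PowerSeries.coeff_mk] at h
  exact h
end S16
namespace S16
open Polynomial Finset

lemma coeff_zero_pow (p : Bzy) (i : ℕ) : (p ^ i).coeff 0 = (p.coeff 0) ^ i := by
  induction i with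
  | zero => simp
  | succ n ih => rw [pow_succ, pow_succ, Polynomial.mul_coeff_zero, ih]

lemma yBX_coeff0 : (yB - X : Bzy).coeff 0 = X := by
  rw [Polynomial.coeff_sub, Polynomial.coeff_X_zero, sub_zero]
  exact Polynomial.coeff_C_zero

lemma embZ_coeff0 (r : Polynomial ℂ) : (embZ r).coeff 0 = C (r.coeff 0) :=
  Polynomial.coeff_map _ _

lemma SB_coeff0 (P : ℕ → Bzy) (m : ℕ) : (SB P m).coeff 0 = T P m := by
  unfold SB T
  rw [Polynomial.finset_sum_coeff]
  refine Finset.sum_congr rfl fun k _ => ?_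
  rw [Polynomial.mul_coeff_zero, coeff_zero_pow, yBX_coeff0, embZ_coeff0]
  rfl

lemma linB_coeff0 (ρ : ℝ) : (linB ρ).coeff 0 = C (1 - (ρ:ℂ)) := by
  unfold linB
  rw [Polynomial.coeff_add, Polynomial.mul_coeff_zero, Polynomial.coeff_X_zero, mul_zero,
    add_zero]
  exact Polynomial.coeff_C_zero

lemma wB_coeff0 (ρ : ℝ) : (wB ρ).coeff 0 = C (ρ:ℂ) * X := by
  unfold wB
  rw [Polynomial.mul_coeff_zero, yBX_coeff0]
  congr 1
  exact Polynomial.coeff_C_zero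

lemma c0_zero_eq {ρ : ℝ} {P : ℕ → Bzy} (hF : FuncEq ρ P) :
    c0 P 0 = C (1 - (ρ:ℂ)) * T P 0 := by
  unfold c0
  rw [hP0 hF, Polynomial.mul_coeff_zero, linB_coeff0, SB_coeff0]

lemma c0_succ_eq {ρ : ℝ} {P : ℕ → Bzy} (hF : FuncEq ρ P) (n : ℕ) :
    c0 P (n+1) = C (1 - (ρ:ℂ)) * T P (n+1) + C (ρ:ℂ) * (X * T P n) := by
  unfold c0
  rw [hPS hF n, Polynomial.coeff_add, Polynomial.mul_coeff_zero, linB_coeff0, SB_coeff0,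
    Polynomial.mul_coeff_zero, wB_coeff0, SB_coeff0]
  ring

lemma T_coeff (P : ℕ → Bzy) (m i : ℕ) :
    (T P m).coeff i = if i ≤ m then alpha P i (m-i) else 0 := by
  unfold T
  rw [Polynomial.finset_sum_coeff]
  have hterm : ∀ k, (X^(m-k) * C (alpha P (m-k) k)).coeff i =
      if i = m - k then alpha P (m-k) k else 0 := by
    intro k
    rw [mul_comm, Polynomial.coeff_C_mul, Polynomial.coeff_X_pow, mul_ite, mul_one, mul_zero]
  rw [Finset.sum_congr rfl fun k _ => hterm k]
  rcases le_or_gt i m with him | him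
  · rw [Finset.sum_eq_single (m - i)]
    · rw [if_pos (by omega), show m - (m - i) = i by omega, if_pos him]
    · intro b hb hbne
      rw [if_neg (by simp only [Finset.mem_range] at hb; omega)]
    · intro h; exact absurd (Finset.mem_range.2 (by omega)) h
  · rw [if_neg (by omega)]
    apply Finset.sum_eq_zero
    intro b hb
    rw [if_neg (by simp only [Finset.mem_range] at hb; omega)]

lemma F3 {ρ : ℝ} {P : ℕ → Bzy} (hF : FuncEq ρ P) (n : ℕ) :
    (c0 P n).coeff 0 = (1 - (ρ:ℂ)) * alpha P 0 n := by
  cases n with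
  | zero =>
    rw [c0_zero_eq hF, Polynomial.coeff_C_mul, T_coeff]
    simp
  | succ n =>
    rw [c0_succ_eq hF, Polynomial.coeff_add, Polynomial.coeff_C_mul, Polynomial.coeff_C_mul,
      Polynomial.mul_coeff_zero, Polynomial.coeff_X_zero, zero_mul, mul_zero, add_zero,
      T_coeff]
    simp

lemma F1 {ρ : ℝ} {P : ℕ → Bzy} (hF : FuncEq ρ P) (n i : ℕ) (hi : 1 ≤ i) (hin : i ≤ n) :
    (c0 P n).coeff i = (1 - (ρ:ℂ)) * alpha P i (n-i) + (ρ:ℂ) * alpha P (i-1) (n-i) := by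
  obtain ⟨n', rfl⟩ : ∃ n', n = n' + 1 := ⟨n - 1, by omega⟩
  obtain ⟨i', rfl⟩ : ∃ i', i = i' + 1 := ⟨i - 1, by omega⟩
  rw [c0_succ_eq hF, Polynomial.coeff_add, Polynomial.coeff_C_mul, Polynomial.coeff_C_mul,
    Polynomial.coeff_X_mul, T_coeff, T_coeff]
  rw [if_pos (by omega : i' + 1 ≤ n' + 1), if_pos (by omega : i' ≤ n')]
  have h1 : n' + 1 - (i' + 1) = n' - i' := by omega
  have h2 : i' + 1 - 1 = i' := by omega
  rw [h1, h2]

lemma F2 {ρ : ℝ} {P : ℕ → Bzy} (hF : FuncEq ρ P) (n i : ℕ) (hin : n < i) :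
    (c0 P n).coeff i = 0 := by
  cases n with
  | zero =>
    rw [c0_zero_eq hF, Polynomial.coeff_C_mul, T_coeff, if_neg (by omega), mul_zero]
  | succ n =>
    obtain ⟨i', rfl⟩ : ∃ i', i = i' + 1 := ⟨i - 1, by omega⟩
    rw [c0_succ_eq hF, Polynomial.coeff_add, Polynomial.coeff_C_mul, Polynomial.coeff_C_mul,
      Polynomial.coeff_X_mul, T_coeff, T_coeff, if_neg (by omega), if_neg (by omega)]
    ring

lemma c0_natDegree_le {ρ : ℝ} {P : ℕ → Bzy} (hF : FuncEq ρ P) (n : ℕ) :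
    (c0 P n).natDegree ≤ n :=
  Polynomial.natDegree_le_iff_coeff_eq_zero.2 fun N hN => F2 hF n N hN

/- phi recursions -/

lemma phi_SB (P : ℕ → Bzy) (j m : ℕ) :
    phi j (SB P m) = if j ≤ m then ahat P j (m-j) else 0 := by
  unfold SB
  rw [phi_sum]
  rw [Finset.sum_congr rfl fun k _ => phi_pow_embZ (m-k) j (ahat P (m-k) k)]
  rcases le_or_gt j m with hjm | hjm
  · rw [Finset.sum_eq_single (m - j)]
    · rw [if_pos (by omega), if_pos hjm, show m - (m - j) = j by omega]
    · intro b hb hbne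
      rw [if_neg (by simp only [Finset.mem_range] at hb; omega)]
    · intro h; exact absurd (Finset.mem_range.2 (by omega)) h
  · rw [if_neg (by omega)]
    apply Finset.sum_eq_zero
    intro b hb
    rw [if_neg (by simp only [Finset.mem_range] at hb; omega)]

lemma phi_linB_mul (ρ : ℝ) (j : ℕ) (Q : Bzy) :
    phi j (linB ρ * Q) = lam ρ * phi j Q := by
  have h : linB ρ * Q = cB (1 - (ρ:ℂ)) * Q + cB (ρ:ℂ) * (X * Q) := by
    unfold linB; ring
  rw [h, phi_add, phi_cB_mul, phi_cB_mul, phi_X_mul]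
  unfold lam
  ring

lemma phi_wB_mul_succ (ρ : ℝ) (j : ℕ) (Q : Bzy) :
    phi (j+1) (wB ρ * Q) = C (ρ:ℂ) * phi j Q := by
  have h : wB ρ * Q = cB (ρ:ℂ) * ((yB - X) * Q) := by unfold wB; ring
  rw [h, phi_cB_mul, phi_succ_yBX_mul]

lemma phi_wB_mul_zero (ρ : ℝ) (Q : Bzy) : phi 0 (wB ρ * Q) = 0 := by
  have h : wB ρ * Q = cB (ρ:ℂ) * ((yB - X) * Q) := by unfold wB; ring
  rw [h, phi_cB_mul, phi_zero_yBX_mul, mul_zero]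

lemma phi_bracket_key (P : ℕ → Bzy) (j k : ℕ) :
    X * ahat P j k = phi j (P k) + (X - 1) * hasseDeriv j (c0 P k) := by
  have h := congrArg (phi j) (bracket_key P k)
  rw [phi_X_mul] at h
  have h2 : phi j (P k + (X - 1) * Polynomial.C ((P k).coeff 0)) =
      phi j (P k) + (X - 1) * hasseDeriv j (c0 P k) := by
    rw [phi_add]
    congr 1
    have h3 : (X - 1) * Polynomial.C ((P k).coeff 0) =
        X * Polynomial.C ((P k).coeff 0) - Polynomial.C ((P k).coeff 0) := by ring
    rw [h3, phi_sub, phi_X_mul, phi_C]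
    unfold c0
    ring
  rw [h2] at h
  exact h

lemma phiP_zero {ρ : ℝ} {P : ℕ → Bzy} (hF : FuncEq ρ P) (k : ℕ) :
    phi 0 (P k) = lam ρ * ahat P 0 k := by
  cases k with
  | zero =>
    rw [hP0 hF, phi_linB_mul, phi_SB, if_pos (le_refl 0)]
  | succ k =>
    rw [hPS hF k, phi_add, phi_linB_mul, phi_wB_mul_zero, add_zero, phi_SB,
      if_pos (Nat.zero_le _)]
    rfl

lemma main1 {ρ : ℝ} {P : ℕ → Bzy} (hρ : ρ ∈ Set.Ioo (0:ℝ) 1) (hF : FuncEq ρ P) (k : ℕ) :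
    C (1 - (ρ:ℂ)) * ahat P 0 k = c0 P k := by
  have h := phi_bracket_key P 0 k
  rw [phiP_zero hF k] at h
  have hid : hasseDeriv 0 (c0 P k) = c0 P k := by
    rw [hasseDeriv_zero]; rfl
  rw [hid] at h
  have hXlam : (X : Polynomial ℂ) - lam ρ = C (1 - (ρ:ℂ)) * (X - 1) := by
    unfold lam
    rw [map_sub, map_one]
    ring
  have h2 : (X - 1) * (C (1 - (ρ:ℂ)) * ahat P 0 k) = (X - 1) * c0 P k := by
    have : (X - lam ρ) * ahat P 0 k = (X - 1) * c0 P k := by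
      rw [sub_mul, h]; ring
    rw [← this, hXlam]; ring
  have hX1 : (X - 1 : Polynomial ℂ) ≠ 0 := by
    have := Polynomial.X_sub_C_ne_zero (1 : ℂ)
    rwa [Polynomial.C_1] at this
  exact mul_left_cancel₀ hX1 h2

lemma main2 {ρ : ℝ} {P : ℕ → Bzy} (hF : FuncEq ρ P) (j k : ℕ) (hj : 1 ≤ j) (hjk : j ≤ k) :
    X * ahat P j k = lam ρ * ahat P j (k-j) + C (ρ:ℂ) * ahat P (j-1) (k-j)
      + (X - 1) * hasseDeriv j (c0 P k) := by
  obtain ⟨k', rfl⟩ : ∃ k', k = k' + 1 := ⟨k - 1, by omega⟩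
  obtain ⟨j', rfl⟩ : ∃ j', j = j' + 1 := ⟨j - 1, by omega⟩
  have h := phi_bracket_key P (j'+1) (k'+1)
  rw [hPS hF k', phi_add, phi_linB_mul, phi_wB_mul_succ, phi_SB, phi_SB] at h
  rw [if_pos hjk, if_pos (by omega : j' ≤ k')] at h
  rw [h, show j' + 1 - 1 = j' by omega, show k' + 1 - (j' + 1) = k' - j' by omega]

lemma main3 {ρ : ℝ} {P : ℕ → Bzy} (hF : FuncEq ρ P) (j k : ℕ) (hkj : k < j) :
    X * ahat P j k = (X - 1) * hasseDeriv j (c0 P k) := by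
  have h := phi_bracket_key P j k
  have hz : phi j (P k) = 0 := by
    cases k with
    | zero =>
      rw [hP0 hF, phi_linB_mul, phi_SB, if_neg (by omega), mul_zero]
    | succ k =>
      obtain ⟨j', rfl⟩ : ∃ j', j = j' + 1 := ⟨j - 1, by omega⟩
      rw [hPS hF k, phi_add, phi_linB_mul, phi_wB_mul_succ, phi_SB, phi_SB,
        if_neg (by omega), if_neg (by omega), mul_zero, mul_zero, add_zero]
  rw [hz, zero_add] at h
  exact h

lemma hasse_c0_vanish {ρ : ℝ} {P : ℕ → Bzy} (hF : FuncEq ρ P) (j k : ℕ) (hkj : k < j) :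
    hasseDeriv j (c0 P k) = 0 := by
  ext n
  rw [hasseDeriv_coeff, F2 hF k (n+j) (by omega), mul_zero]
  rfl

lemma ahat_vanish {ρ : ℝ} {P : ℕ → Bzy} (hF : FuncEq ρ P) (j k : ℕ) (hkj : k < j) :
    ahat P j k = 0 := by
  have h := main3 hF j k hkj
  rw [hasse_c0_vanish hF j k hkj, mul_zero] at h
  rcases mul_eq_zero.mp h with h1 | h1
  · exact absurd h1 Polynomial.X_ne_zero
  · exact h1

end S16

namespace S16
open Polynomial Finset


noncomputable def Nn (p : Polynomial ℂ) : ℝ :=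
  ∑ n ∈ Finset.range (p.natDegree + 1), (n.factorial : ℝ) * Complex.abs (p.coeff n)

lemma nn_nonneg (p : Polynomial ℂ) : 0 ≤ Nn p :=
  Finset.sum_nonneg fun _ _ => by positivity

lemma nn_eq (p : Polynomial ℂ) {d : ℕ} (hd : p.natDegree < d) :
    Nn p = ∑ n ∈ Finset.range d, (n.factorial : ℝ) * Complex.abs (p.coeff n) := by
  apply Finset.sum_subset (Finset.range_subset_range.2 hd)
  intro x _ hx2
  simp only [Finset.mem_range, not_lt] at hx2
  rw [Polynomial.coeff_eq_zero_of_natDegree_lt (by omega), map_zero, mul_zero]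

lemma nn_sum_le (p : Polynomial ℂ) (d : ℕ) :
    ∑ n ∈ Finset.range d, (n.factorial : ℝ) * Complex.abs (p.coeff n) ≤ Nn p := by
  rcases le_or_gt d (p.natDegree + 1) with h | h
  · apply Finset.sum_le_sum_of_subset_of_nonneg (Finset.range_subset_range.2 h)
    intros; positivity
  · exact le_of_eq (nn_eq p (by omega)).symm

lemma nn_coeff_le (p : Polynomial ℂ) (n : ℕ) :
    (n.factorial : ℝ) * Complex.abs (p.coeff n) ≤ Nn p := by
  refine le_trans ?_ (nn_sum_le p (n+1))
  exact Finset.single_le_sum (f := fun m => (m.factorial : ℝ) * Complex.abs (p.coeff m))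
    (fun _ _ => by positivity) (Finset.self_mem_range_succ n)

lemma nn_coeff_le' (p : Polynomial ℂ) (n : ℕ) : Complex.abs (p.coeff n) ≤ Nn p := by
  refine le_trans ?_ (nn_coeff_le p n)
  have h1 : (1:ℝ) ≤ n.factorial := by exact_mod_cast Nat.one_le_iff_ne_zero.2 n.factorial_ne_zero
  nlinarith [Complex.abs.nonneg (p.coeff n)]

lemma nn_shift_le (p : Polynomial ℂ) (d : ℕ) :
    ∑ m ∈ Finset.range d, ((m+1).factorial : ℝ) * Complex.abs (p.coeff (m+1)) ≤ Nn p := by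
  have h := nn_sum_le p (d+1)
  rw [Finset.sum_range_succ'] at h
  have h0 : (0:ℝ) ≤ (Nat.factorial 0 : ℝ) * Complex.abs (p.coeff 0) := by positivity
  linarith

lemma nn_shift_le' (p : Polynomial ℂ) (d : ℕ) :
    ∑ m ∈ Finset.range d, (m.factorial : ℝ) * Complex.abs (p.coeff (m+1)) ≤ Nn p := by
  refine le_trans (Finset.sum_le_sum ?_) (nn_shift_le p d)
  intro i _
  have : (i.factorial : ℝ) ≤ ((i+1).factorial : ℝ) := by
    exact_mod_cast Nat.factorial_le (Nat.le_succ i)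
  nlinarith [Complex.abs.nonneg (p.coeff (i+1))]

lemma nn_eval_le (p : Polynomial ℂ) {z : ℂ} (hz : Complex.abs z ≤ 1) :
    Complex.abs (p.eval z) ≤ Nn p := by
  rw [Polynomial.eval_eq_sum_range]
  refine le_trans (Complex.abs.sum_le _ _) ?_
  refine le_trans (Finset.sum_le_sum ?_) (nn_sum_le p (p.natDegree + 1))
  intro i _
  rw [map_mul, map_pow]
  have h1 : Complex.abs z ^ i ≤ 1 := pow_le_one₀ (Complex.abs.nonneg z) hz
  have h2 : (1:ℝ) ≤ i.factorial := by exact_mod_cast Nat.one_le_iff_ne_zero.2 i.factorial_ne_zero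
  nlinarith [Complex.abs.nonneg (p.coeff i), pow_nonneg (Complex.abs.nonneg z) i]

lemma nn_derivative_le (p : Polynomial ℂ) : Nn (Polynomial.derivative p) ≤ Nn p := by
  rw [Nn]
  refine le_trans (le_of_eq (Finset.sum_congr rfl ?_)) (nn_shift_le p _)
  intro m _
  rw [Polynomial.coeff_derivative, map_mul]
  have hc : ((m:ℂ) + 1) = ((m+1 : ℕ) : ℂ) := by push_cast; ring
  rw [hc, Complex.abs_natCast, Nat.factorial_succ]
  push_cast; ring

lemma nn_iter_deriv_eval (p : Polynomial ℂ) (m : ℕ) {z : ℂ} (hz : Complex.abs z ≤ 1) :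
    Complex.abs (((Polynomial.derivative)^[m] p).eval z) ≤ Nn p := by
  induction m generalizing p with
  | zero => exact nn_eval_le p hz
  | succ m ih =>
    rw [Function.iterate_succ_apply]
    exact le_trans (ih (Polynomial.derivative p)) (nn_derivative_le p)

lemma nn_C_mul (c : ℂ) (p : Polynomial ℂ) :
    Nn (Polynomial.C c * p) = Complex.abs c * Nn p := by
  by_cases hc : c = 0
  · subst hc; simp [Nn]
  · rw [Nn, Nn, Polynomial.natDegree_C_mul hc, Finset.mul_sum]
    refine Finset.sum_congr rfl fun i _ => ?_
    rw [Polynomial.coeff_C_mul, map_mul]; ring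

lemma nn_nsmul (n : ℕ) (p : Polynomial ℂ) : Nn (n • p) = (n : ℝ) * Nn p := by
  have : (n • p) = Polynomial.C (n : ℂ) * p := by
    rw [nsmul_eq_mul, Polynomial.C_eq_natCast]
  rw [this, nn_C_mul, Complex.abs_natCast]

/- numeric series lemmas -/

lemma geom_range_le {y : ℝ} (h0 : 0 ≤ y) (h1 : y < 1) (n : ℕ) :
    ∑ i ∈ Finset.range n, y ^ i ≤ 1 / (1 - y) := by
  have hden : (0:ℝ) < 1 - y := by linarith
  rw [geom_sum_eq (ne_of_lt h1) n,
    show (y^n-1)/(y-1) = (1-y^n)/(1-y) by rw [← neg_div_neg_eq]; ring_nf]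
  rw [div_le_div_iff₀ hden hden]
  nlinarith [pow_nonneg h0 n]

lemma geom_Ico_le {y : ℝ} (h0 : 0 ≤ y) (h1 : y < 1) (a n : ℕ) :
    ∑ i ∈ Finset.Ico a n, y ^ i ≤ y ^ a / (1 - y) := by
  rw [Finset.sum_Ico_eq_sum_range]
  have : ∀ i, y ^ (a + i) = y ^ a * y ^ i := fun i => pow_add y a i
  rw [Finset.sum_congr rfl fun i _ => this i, ← Finset.mul_sum]
  rw [div_eq_mul_one_div]
  exact mul_le_mul_of_nonneg_left (geom_range_le h0 h1 _) (pow_nonneg h0 a)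

lemma nat_le_two_pow_pred : ∀ i : ℕ, 1 ≤ i → (i : ℝ) ≤ 2 ^ (i - 1) := by
  intro i hi
  induction i with
  | zero => omega
  | succ n ih =>
    rcases Nat.eq_or_lt_of_le hi with h | h
    · simp [← h]
    · have hn : 1 ≤ n := by omega
      have := ih hn
      have h2 : (n:ℝ) + 1 ≤ 2 * n := by
        have : (1:ℝ) ≤ n := by exact_mod_cast hn
        linarith
      have h3 : n + 1 - 1 = n := by omega
      rw [h3]
      have h4 : (2:ℝ) ^ n = 2 * 2 ^ (n - 1) := by
        conv_lhs => rw [show n = (n-1)+1 by omega]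
        ring
      push_cast
      rw [h4]
      linarith

lemma gsum_le {x ρ η : ℝ} (hx0 : 0 < x) (hx2 : 2*x < 1) (hρ0 : 0 ≤ ρ) (hρ1 : ρ ≤ 1)
    (hη : 0 ≤ η) (a n : ℕ) (ha : 1 ≤ a) :
    ∑ i ∈ Finset.Ico a n, ((1-ρ)*η + i*ρ*η) * x^i ≤ (η/2) * ((2*x)^a / (1-2*x)) := by
  have key : ∀ i ∈ Finset.Ico a n, ((1-ρ)*η + i*ρ*η) * x^i ≤ (η/2) * (2*x)^i := by
    intro i hi
    have hi1 : 1 ≤ i := le_trans ha (Finset.mem_Ico.1 hi).1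
    have h1 : (1-ρ)*η + i*ρ*η ≤ i * η := by
      have hge : (1:ℝ) ≤ i := by exact_mod_cast hi1
      have hkey : 0 ≤ η * ((i:ℝ) - 1) * (1 - ρ) :=
        mul_nonneg (mul_nonneg hη (by linarith)) (by linarith)
      nlinarith [hkey]
    have h2 : (i:ℝ) ≤ 2^(i-1) := nat_le_two_pow_pred i hi1
    have h3 : (2:ℝ)^i = 2 * 2^(i-1) := by
      conv_lhs => rw [show i = (i-1)+1 by omega]
      ring
    have hxp : (0:ℝ) ≤ x ^ i := pow_nonneg hx0.le i
    calc ((1-ρ)*η + i*ρ*η) * x^i ≤ (i * η) * x^i :=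
          mul_le_mul_of_nonneg_right h1 hxp
      _ ≤ (2^(i-1) * η) * x^i := by
          have := mul_le_mul_of_nonneg_right
            (mul_le_mul_of_nonneg_right h2 hη) hxp
          linarith
      _ = (η/2) * (2*x)^i := by rw [mul_pow, h3]; ring
  refine le_trans (Finset.sum_le_sum key) ?_
  rw [← Finset.mul_sum]
  have := geom_Ico_le (by linarith : (0:ℝ) ≤ 2*x) (by linarith) a n
  have hη2 : 0 ≤ η/2 := by linarith
  exact mul_le_mul_of_nonneg_left this hη2

end S16

namespace S16
open Polynomial Finset

lemma eval_one_sum (p : Polynomial ℂ) (d : ℕ) (hd : p.natDegree < d) :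
    p.eval 1 = ∑ i ∈ Finset.range d, p.coeff i := by
  rw [Polynomial.eval_eq_sum_range]
  have h1 : ∀ i, p.coeff i * (1:ℂ)^i = p.coeff i := fun i => by rw [one_pow, mul_one]
  rw [Finset.sum_congr rfl fun i _ => h1 i]
  apply Finset.sum_subset (Finset.range_subset_range.2 hd)
  intro x _ hx2
  simp only [Finset.mem_range, not_lt] at hx2
  exact Polynomial.coeff_eq_zero_of_natDegree_lt (by omega)

lemma F4 {ρ : ℝ} {P : ℕ → Bzy} (hF : FuncEq ρ P) (hB : Boundary ρ P) (n : ℕ) (hn : 1 ≤ n) :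
    (c0 P n).coeff 0 = - ∑ i ∈ Finset.Ico 1 (n+1), (c0 P n).coeff i := by
  have he : (c0 P n).eval 1 = 0 := hB.2 n hn
  rw [eval_one_sum (c0 P n) (n+1) (by have := c0_natDegree_le hF n; omega)] at he
  rw [Finset.range_eq_Ico, Finset.sum_eq_sum_Ico_succ_bot (by omega : 0 < n+1)] at he
  exact eq_neg_of_add_eq_zero_left he

lemma F5 {ρ : ℝ} {P : ℕ → Bzy} (hρ : ρ ∈ Set.Ioo (0:ℝ) 1) (hF : FuncEq ρ P)
    (hB : Boundary ρ P) : ahat P 0 0 = 1 := by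
  have hrc : (1 : ℂ) - (ρ:ℂ) ≠ 0 := by
    intro h
    have h2 := congrArg Complex.re h
    simp at h2
    exact absurd h2 (by have := hρ.2; intro hh; linarith)
  have hT : T P 0 = C (alpha P 0 0) := by
    unfold T
    rw [Finset.sum_range_one]
    simp
  have hc := c0_zero_eq hF
  rw [hT] at hc
  have he : (c0 P 0).eval 1 = 1 - (ρ:ℂ) := hB.1
  rw [hc] at he
  simp only [Polynomial.eval_mul, Polynomial.eval_C] at he
  have hα : alpha P 0 0 = 1 := by
    apply mul_left_cancel₀ hrc
    rw [he, mul_one]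
  have hm := main1 hρ hF 0
  rw [hc, hα] at hm
  have h2 : C ((1:ℂ) - ρ) * ahat P 0 0 = C ((1:ℂ) - ρ) * 1 := by
    rw [hm, map_one, mul_one]
  exact mul_left_cancel₀ (by rwa [Ne, Polynomial.C_eq_zero]) h2

/- bridge aCoef = j! • ahat -/

lemma dy_coeff (Q : Bzy) (n : ℕ) : (dy Q).coeff n = Polynomial.derivative (Q.coeff n) := by
  unfold dy
  rw [Polynomial.sum_def, Polynomial.finset_sum_coeff]
  have hterm : ∀ m, (Polynomial.C (Polynomial.derivative (Q.coeff m)) * X ^ m).coeff n =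
      if n = m then Polynomial.derivative (Q.coeff m) else 0 := by
    intro m
    rw [Polynomial.coeff_C_mul, Polynomial.coeff_X_pow, mul_ite, mul_one, mul_zero]
  rw [Finset.sum_congr rfl fun m _ => hterm m]
  rw [Finset.sum_eq_single n]
  · rw [if_pos rfl]
  · intro b _ hbne
    rw [if_neg (Ne.symm hbne)]
  · intro h
    rw [if_pos rfl, Polynomial.notMem_support_iff.1 h, map_zero]

lemma dy_iter_coeff (j : ℕ) (Q : Bzy) (n : ℕ) :
    ((dy^[j]) Q).coeff n = (Polynomial.derivative^[j]) (Q.coeff n) := by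
  induction j generalizing Q with
  | zero => rfl
  | succ j ih =>
    rw [Function.iterate_succ_apply, Function.iterate_succ_apply, ih (dy Q), dy_coeff]

lemma support_dy_iter (j : ℕ) (Q : Bzy) : ((dy^[j]) Q).support ⊆ Q.support := by
  intro n hn
  rw [Polynomial.mem_support_iff] at hn ⊢
  intro h
  apply hn
  rw [dy_iter_coeff, h]
  exact Function.iterate_fixed (map_zero _) j

lemma aCoef_eq (P : ℕ → Bzy) (j k : ℕ) :
    aCoef P j k = (j.factorial) • ahat P j k := by
  unfold aCoef ahat phi
  rw [Polynomial.eval₂_eq_sum, Polynomial.sum_def, Polynomial.sum_def]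
  have hstep : ∑ n ∈ ((dy^[j]) (bracket P k)).support,
        RingHom.id (Polynomial ℂ) (((dy^[j]) (bracket P k)).coeff n) * X ^ n
      = ∑ n ∈ (bracket P k).support,
        (Polynomial.derivative^[j]) ((bracket P k).coeff n) * X ^ n := by
    rw [Finset.sum_subset (support_dy_iter j (bracket P k))]
    · refine Finset.sum_congr rfl fun n _ => ?_
      rw [RingHom.id_apply, dy_iter_coeff]
    · intro n _ hn
      rw [RingHom.id_apply, Polynomial.notMem_support_iff.1 hn, zero_mul]
  rw [hstep, Finset.smul_sum]
  refine Finset.sum_congr rfl fun n _ => ?_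
  have hd : (Polynomial.derivative^[j]) ((bracket P k).coeff n) =
      j.factorial • hasseDeriv j ((bracket P k).coeff n) := by
    rw [← Polynomial.factorial_smul_hasseDeriv j]
    rfl
  rw [hd, smul_mul_assoc]

lemma jfact_nn_hasse (p : Polynomial ℂ) (j k : ℕ) (hdeg : p.natDegree ≤ k) (hjk : j ≤ k) :
    (j.factorial : ℝ) * Nn (hasseDeriv j p) =
      ∑ i ∈ Finset.Ico j (k+1), (i.factorial : ℝ) * Complex.abs (p.coeff i) := by
  have hd : (hasseDeriv j p).natDegree < k + 1 - j := by
    have h1 := Polynomial.natDegree_hasseDeriv_le p j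
    omega
  rw [nn_eq _ hd, Finset.mul_sum]
  rw [Finset.sum_Ico_eq_sum_range]
  have he : k + 1 - j = k + 1 - j := rfl
  refine Finset.sum_congr rfl fun m _ => ?_
  rw [hasseDeriv_coeff, map_mul, Complex.abs_natCast]
  have hfact : (j.factorial : ℝ) * ((m.factorial : ℝ) * (((m+j).choose j : ℕ) : ℝ)) =
      ((m+j).factorial : ℝ) := by
    rw [← Nat.add_choose_mul_factorial_mul_factorial m j]
    push_cast
    ring
  have hidx : j + m = m + j := by omega
  rw [hidx]
  calc (j.factorial : ℝ) * ((m.factorial : ℝ) *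
        ((((m+j).choose j : ℕ) : ℝ) * Complex.abs (p.coeff (m+j))))
      = ((j.factorial : ℝ) * ((m.factorial : ℝ) * (((m+j).choose j : ℕ) : ℝ))) *
          Complex.abs (p.coeff (m+j)) := by ring
    _ = ((m+j).factorial : ℝ) * Complex.abs (p.coeff (m+j)) := by rw [hfact]

end S16
namespace S16
open Polynomial Finset



lemma K0' (ρ x : ℝ) (hρ0 : 0 < ρ) (hρ1 : ρ < 1) (hx0 : 0 < x) (hx1 : x ≤ 677/5000)
    (hx2 : 2*x ≤ 1-ρ) :
    (2*((1-ρ)*(23/50) + ρ)*x)*(1-2*x) + 3*(23/50)*x^2 ≤ (1-ρ)*(1-2*x) := by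
  nlinarith [mul_nonneg (mul_nonneg (by linarith : (0:ℝ) ≤ 1-ρ-2*x) hx0.le) (by linarith : (0:ℝ) ≤ 1-ρ),
    mul_nonneg (by linarith : (0:ℝ) ≤ 1-ρ-2*x) (mul_nonneg hx0.le hx0.le),
    mul_nonneg (mul_nonneg (by linarith : (0:ℝ) ≤ 677/5000 - x) hx0.le) (by linarith : (0:ℝ) ≤ 1-ρ),
    mul_nonneg (mul_nonneg (by linarith : (0:ℝ) ≤ 1-ρ-2*x) (by linarith : (0:ℝ) ≤ 1-ρ)) (by linarith : (0:ℝ) ≤ 1-ρ),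
    sq_nonneg (1-ρ-2*x), sq_nonneg x, mul_pos hx0 hρ0]

lemma K1' (ρ x : ℝ) (hρ0 : 0 < ρ) (hρ1 : ρ < 1) (hx0 : 0 < x) (hx1 : x ≤ 677/5000)
    (hx2 : 2*x ≤ 1-ρ) :
    ((23/50+ρ)*x + 2*((1-ρ)*(23/50)+ρ)*x)*(1-2*x) + 4*(23/50)*x^2 ≤ (23/50)*(1-2*x) := by
  nlinarith [mul_nonneg (mul_nonneg (by linarith : (0:ℝ) ≤ 677/5000 - x) hx0.le) (by linarith : (0:ℝ) ≤ 1-ρ),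
    mul_nonneg (by linarith : (0:ℝ) ≤ 677/5000 - x) (by linarith : (0:ℝ) ≤ 1-ρ-2*x),
    mul_nonneg (by linarith : (0:ℝ) ≤ 677/5000 - x) hx0.le,
    mul_nonneg (by linarith : (0:ℝ) ≤ 1-ρ-2*x) hx0.le,
    sq_nonneg x, mul_pos hx0 hρ0]

lemma K2' (x : ℝ) (hx0 : 0 < x) (hx1 : x ≤ 677/5000) :
    (2*x)^2 + (2*x)^2/(1-2*x) ≤ 1 := by
  have hu : (0:ℝ) < 1-2*x := by linarith
  have h : (2*x)^2/(1-2*x) ≤ 1 - (2*x)^2 := by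
    rw [div_le_iff₀ hu]; nlinarith
  linarith

noncomputable def eps : ℕ → ℝ := fun j => if j = 0 then 1 else 23/50

lemma eps_pos (j : ℕ) : 0 < eps j := by unfold eps; split <;> norm_num
lemma eps_le_one (j : ℕ) : eps j ≤ 1 := by unfold eps; split <;> norm_num
lemma eps_zero : eps 0 = 1 := rfl
lemma eps_succ (j : ℕ) (hj : 1 ≤ j) : eps j = 23/50 := by unfold eps; rw [if_neg (by omega)]

set_option maxHeartbeats 2000000 in
theorem key {ρ : ℝ} {P : ℕ → Bzy} (hρ : ρ ∈ Set.Ioo (0:ℝ) 1) (hF : FuncEq ρ P)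
    (hB : Boundary ρ P) :
    ∀ k j : ℕ, (j.factorial : ℝ) * Nn (ahat P j k) ≤
      eps j * (max (Real.exp 2) (2 / (1 - ρ))) ^ k := by
  obtain ⟨hρ0, hρ1⟩ := hρ
  set Cc := max (Real.exp 2) (2 / (1 - ρ)) with hCc
  have h1ρ : 0 < 1 - ρ := by linarith
  have hexp : (7.389 : ℝ) ≤ Real.exp 2 := by
    have h := Real.exp_one_gt_d9
    have h2 : Real.exp 2 = Real.exp 1 * Real.exp 1 := by
      rw [← Real.exp_add]; norm_num
    nlinarith
  have hCc7 : (7.389 : ℝ) ≤ Cc := le_trans hexp (le_max_left _ _)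
  have hCc0 : 0 < Cc := by linarith
  set x := Cc⁻¹ with hxdef
  have hx0 : 0 < x := inv_pos.2 hCc0
  have hx1 : x ≤ 677/5000 := by
    have h5 : (5000/677 : ℝ) ≤ Cc := by nlinarith
    have := inv_anti₀ (by norm_num : (0:ℝ) < 5000/677) h5
    rw [hxdef]
    calc Cc⁻¹ ≤ (5000/677 : ℝ)⁻¹ := this
      _ = 677/5000 := by norm_num
  have hx2 : 2 * x ≤ 1 - ρ := by
    have hC2 : 2/(1-ρ) ≤ Cc := le_max_right _ _
    have hpos : (0:ℝ) < 2/(1-ρ) := by positivity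
    have := inv_anti₀ hpos hC2
    rw [hxdef]
    have h3 : (2/(1-ρ) : ℝ)⁻¹ = (1-ρ)/2 := by field_simp
    rw [h3] at this
    linarith
  have hu0 : (0:ℝ) < 1 - 2*x := by nlinarith
  have powsplit : ∀ i k : ℕ, i ≤ k → Cc^(k-i) = Cc^k * x^i := by
    intro i k hik
    have h1 : Cc^(k-i) * Cc^i = Cc^k := by
      rw [← pow_add]
      congr 1
      omega
    have h2 : (Cc^i) ≠ 0 := pow_ne_zero _ (ne_of_gt hCc0)
    rw [hxdef, inv_pow, ← h1, mul_assoc, mul_inv_cancel₀ h2, mul_one]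
  intro k
  induction k using Nat.strong_induction_on with
  | _ k IH =>
  intro j
  have halpha : ∀ i κ, κ < k → (i.factorial : ℝ) * Complex.abs (alpha P i κ) ≤
      eps i * Cc ^ κ := by
    intro i κ hκ
    have h1 : Complex.abs (alpha P i κ) ≤ Nn (ahat P i κ) := nn_coeff_le' _ 0
    have h2 := IH κ hκ i
    have h3 : (i.factorial:ℝ) * Complex.abs (alpha P i κ) ≤
        (i.factorial:ℝ) * Nn (ahat P i κ) := by
      apply mul_le_mul_of_nonneg_left h1 (by positivity)
    linarith
  have habs1ρ : Complex.abs (1 - (ρ:ℂ)) = 1 - ρ := by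
    rw [show (1 : ℂ) - (ρ:ℂ) = ((1 - ρ : ℝ) : ℂ) by push_cast; ring, Complex.abs_ofReal,
      abs_of_pos h1ρ]
  have habsρ : Complex.abs ((ρ:ℂ)) = ρ := by rw [Complex.abs_ofReal, abs_of_pos hρ0]
  have hgb : ∀ i, 1 ≤ i → i ≤ k →
      (i.factorial : ℝ) * Complex.abs ((c0 P k).coeff i) ≤
        ((1-ρ) * eps i + i * ρ * eps (i-1)) * Cc ^ (k-i) := by
    intro i hi1 hik
    rw [F1 hF k i hi1 hik]
    have htri := Complex.abs.add_le ((1 - (ρ:ℂ)) * alpha P i (k-i))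
      ((ρ:ℂ) * alpha P (i-1) (k-i))
    rw [map_mul, map_mul, habs1ρ, habsρ] at htri
    have hα1 := halpha i (k-i) (by omega)
    have hα2 := halpha (i-1) (k-i) (by omega)
    have hifn : i.factorial = i * (i-1).factorial := by
      conv_lhs => rw [show i = (i-1)+1 by omega]
      rw [Nat.factorial_succ, show (i-1)+1 = i by omega]
    have hif : (i.factorial : ℝ) = i * ((i-1).factorial : ℝ) := by
      rw [hifn]; push_cast; ring
    have hfpos : (0:ℝ) ≤ (i.factorial : ℝ) := by positivity
    have step1 : (i.factorial : ℝ) * Complex.abs ((1 - (ρ:ℂ)) * alpha P i (k-i)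
          + (ρ:ℂ) * alpha P (i-1) (k-i)) ≤
        (1-ρ) * ((i.factorial:ℝ) * Complex.abs (alpha P i (k-i)))
          + (i:ℝ) * ρ * (((i-1).factorial:ℝ) * Complex.abs (alpha P (i-1) (k-i))) := by
      have := mul_le_mul_of_nonneg_left htri hfpos
      rw [hif] at this ⊢
      nlinarith [Complex.abs.nonneg (alpha P i (k-i)),
        Complex.abs.nonneg (alpha P (i-1) (k-i)),
        (by positivity : (0:ℝ) ≤ ((i-1).factorial : ℝ))]
    refine le_trans step1 ?_
    have hi0 : (0:ℝ) ≤ (i:ℝ) := by positivity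
    have e1 : (1-ρ) * ((i.factorial:ℝ) * Complex.abs (alpha P i (k-i))) ≤
        (1-ρ) * (eps i * Cc^(k-i)) := mul_le_mul_of_nonneg_left hα1 (by linarith)
    have e2 : (i:ℝ) * ρ * (((i-1).factorial:ℝ) * Complex.abs (alpha P (i-1) (k-i))) ≤
        (i:ℝ) * ρ * (eps (i-1) * Cc^(k-i)) :=
      mul_le_mul_of_nonneg_left hα2 (by positivity)
    nlinarith [e1, e2]
  have hIx : ∀ a, 2 ≤ a → ∑ i ∈ Finset.Ico a (k+1),
      ((1-ρ)*eps i + i*ρ*eps (i-1)) * Cc^(k-i)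
      ≤ Cc^k * (((23:ℝ)/50/2) * ((2*x)^a / (1-2*x))) := by
    intro a ha
    have h1 : ∀ i ∈ Finset.Ico a (k+1), ((1-ρ)*eps i + i*ρ*eps (i-1)) * Cc^(k-i)
        = (((1-ρ)*(23/50) + i*ρ*(23/50)) * x^i) * Cc^k := by
      intro i hi
      simp only [Finset.mem_Ico] at hi
      rw [eps_succ i (by omega), eps_succ (i-1) (by omega), powsplit i k (by omega)]
      ring
    rw [Finset.sum_congr rfl h1, ← Finset.sum_mul]
    have h2 := gsum_le hx0 (by linarith) hρ0.le hρ1.le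
      (by norm_num : (0:ℝ) ≤ 23/50) a (k+1) (by omega)
    calc (∑ i ∈ Finset.Ico a (k+1), ((1-ρ)*(23/50) + i*ρ*(23/50)) * x^i) * Cc^k
        ≤ (((23:ℝ)/50/2) * ((2*x)^a / (1-2*x))) * Cc^k := by
          apply mul_le_mul_of_nonneg_right _ (by positivity)
          exact h2
      _ = Cc^k * (((23:ℝ)/50/2) * ((2*x)^a / (1-2*x))) := by ring
  rcases Nat.lt_or_ge k j with hkj | hjk
  · -- case k < j : ahat vanishes
    rw [ahat_vanish hF j k hkj]
    have hz : Nn (0 : Polynomial ℂ) = 0 := by simp [Nn]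
    rw [hz, mul_zero]
    exact mul_nonneg (eps_pos j).le (by positivity)
  rcases Nat.eq_zero_or_pos j with hj0 | hj1
  · -- case j = 0
    subst hj0
    rcases Nat.eq_zero_or_pos k with hk0 | hk1
    · subst hk0
      rw [F5 ⟨hρ0, hρ1⟩ hF hB]
      have h1 : Nn (1 : Polynomial ℂ) = 1 := by simp [Nn]
      rw [h1]
      simp [eps]
    · -- j = 0, k ≥ 1
      have hnd := c0_natDegree_le hF k
      have hNc0 : Nn (c0 P k) = ∑ i ∈ Finset.range (k+1),
          (i.factorial:ℝ) * Complex.abs ((c0 P k).coeff i) := nn_eq _ (by omega)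
      rw [Finset.range_eq_Ico, Finset.sum_eq_sum_Ico_succ_bot (by omega : 0 < k+1)] at hNc0
      have habs0 : Complex.abs ((c0 P k).coeff 0) ≤
          ∑ i ∈ Finset.Ico 1 (k+1), Complex.abs ((c0 P k).coeff i) := by
        rw [F4 hF hB k hk1, Complex.abs.map_neg]
        exact Complex.abs.sum_le _ _
      have hmain : Nn (c0 P k) ≤ ∑ i ∈ Finset.Ico 1 (k+1),
          (Complex.abs ((c0 P k).coeff i)
            + (i.factorial:ℝ) * Complex.abs ((c0 P k).coeff i)) := by
        rw [hNc0, Finset.sum_add_distrib]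
        simp only [Nat.factorial_zero, Nat.cast_one, one_mul]
        linarith
      rw [Finset.sum_eq_sum_Ico_succ_bot (by omega : 1 < k+1)] at hmain
      have hc1 : Complex.abs ((c0 P k).coeff 1)
          + ((1:ℕ).factorial:ℝ) * Complex.abs ((c0 P k).coeff 1)
          ≤ 2 * (((1-ρ)*(23/50) + ρ) * Cc^(k-1)) := by
        have hg1 := hgb 1 (le_refl 1) hk1
        simp only [Nat.factorial_one, Nat.cast_one, one_mul] at hg1 ⊢
        rw [eps_succ 1 (le_refl 1), eps_zero] at hg1
        linarith
      have hctail : ∑ i ∈ Finset.Ico 2 (k+1), (Complex.abs ((c0 P k).coeff i)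
            + (i.factorial:ℝ) * Complex.abs ((c0 P k).coeff i))
          ≤ (3/2) * ∑ i ∈ Finset.Ico 2 (k+1),
              ((1-ρ)*eps i + i*ρ*eps (i-1)) * Cc^(k-i) := by
        rw [Finset.mul_sum]
        apply Finset.sum_le_sum
        intro i hi
        simp only [Finset.mem_Ico] at hi
        have hfge : (2:ℝ) ≤ (i.factorial:ℝ) := by
          have h1 : 2 ≤ i.factorial := le_trans hi.1 (Nat.self_le_factorial i)
          exact_mod_cast h1
        have hgbi := hgb i (by omega) (by omega)
        have habsnn := Complex.abs.nonneg ((c0 P k).coeff i)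
        nlinarith
      have htail2 := hIx 2 (le_refl 2)
      -- assemble
      have hk1' : (1:ℕ) ≤ k := hk1
      have hp1 : Cc^(k-1) = Cc^k * x := by
        rw [powsplit 1 k hk1', pow_one]
      have hNc0le : Nn (c0 P k) ≤ Cc^k * (2*((1-ρ)*(23/50) + ρ)*x
          + (3/2) * (((23:ℝ)/50/2) * ((2*x)^2 / (1-2*x)))) := by
        calc Nn (c0 P k) ≤ _ := hmain
          _ ≤ 2 * (((1-ρ)*(23/50) + ρ) * Cc^(k-1))
              + (3/2) * ∑ i ∈ Finset.Ico 2 (k+1),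
                ((1-ρ)*eps i + i*ρ*eps (i-1)) * Cc^(k-i) := by
            exact add_le_add hc1 hctail
          _ ≤ 2 * (((1-ρ)*(23/50) + ρ) * (Cc^k * x))
              + (3/2) * (Cc^k * (((23:ℝ)/50/2) * ((2*x)^2 / (1-2*x)))) := by
            rw [hp1]
            have := mul_le_mul_of_nonneg_left htail2 (by norm_num : (0:ℝ) ≤ 3/2)
            linarith
          _ = Cc^k * (2*((1-ρ)*(23/50) + ρ)*x
              + (3/2) * (((23:ℝ)/50/2) * ((2*x)^2 / (1-2*x)))) := by ring
      have hK0 : 2*((1-ρ)*(23/50) + ρ)*x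
          + (3/2) * (((23:ℝ)/50/2) * ((2*x)^2 / (1-2*x))) ≤ 1-ρ := by
        have hk0' := K0' ρ x hρ0 hρ1 hx0 hx1 hx2
        have he : (3/2) * (((23:ℝ)/50/2) * ((2*x)^2 / (1-2*x))) = 3*(23/50)*x^2/(1-2*x) := by
          field_simp
        rw [he]
        have hd : 3*(23/50)*x^2/(1-2*x) ≤ (1-ρ) - 2*((1-ρ)*(23/50)+ρ)*x := by
          rw [div_le_iff₀ hu0]
          nlinarith [hk0']
        linarith
      have hm := main1 ⟨hρ0, hρ1⟩ hF k
      have hmn := congrArg Nn hm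
      rw [nn_C_mul, habs1ρ] at hmn
      have hgoal : (1-ρ) * Nn (ahat P 0 k) ≤ (1-ρ) * Cc^k := by
        rw [hmn]
        calc Nn (c0 P k) ≤ Cc^k * (2*((1-ρ)*(23/50) + ρ)*x
            + (3/2) * (((23:ℝ)/50/2) * ((2*x)^2 / (1-2*x)))) := hNc0le
          _ ≤ Cc^k * (1-ρ) := by
            apply mul_le_mul_of_nonneg_left hK0 (by positivity)
          _ = (1-ρ) * Cc^k := by ring
      have hfin : Nn (ahat P 0 k) ≤ Cc^k := le_of_mul_le_mul_left (by linarith) h1ρ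
      simpa [eps] using hfin
  · -- case 1 ≤ j ≤ k
    have hrec := main2 hF j k hj1 hjk
    set A := ahat P j (k-j) with hAdef
    set Bq := ahat P (j-1) (k-j) with hBdef
    set H := hasseDeriv j (c0 P k) with hHdef
    have hcoeff : ∀ m, (ahat P j k).coeff m =
        (1-(ρ:ℂ))*(A.coeff (m+1)) + (ρ:ℂ)*(A.coeff m) + (ρ:ℂ)*(Bq.coeff (m+1))
          + (H.coeff m - H.coeff (m+1)) := by
      intro m
      have hrw : lam ρ * A + C (ρ:ℂ) * Bq + (X - 1) * H =
          C (1-(ρ:ℂ))*A + C (ρ:ℂ)*(X*A) + C (ρ:ℂ)*Bq + (X*H - H) := by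
        unfold lam; ring
      have h := congrArg (fun p => Polynomial.coeff p (m+1)) hrec
      rw [Polynomial.coeff_X_mul, hrw] at h
      rw [h, Polynomial.coeff_add, Polynomial.coeff_add, Polynomial.coeff_add,
        Polynomial.coeff_sub, Polynomial.coeff_C_mul, Polynomial.coeff_C_mul,
        Polynomial.coeff_C_mul, Polynomial.coeff_X_mul, Polynomial.coeff_X_mul]
    have hNle : Nn (ahat P j k) ≤ Nn A + ρ * Nn Bq + 2 * Nn H := by
      have hterm : ∀ m ∈ Finset.range ((ahat P j k).natDegree + 1),
          (m.factorial:ℝ) * Complex.abs ((ahat P j k).coeff m) ≤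
          (1-ρ)*((m.factorial:ℝ)*Complex.abs (A.coeff (m+1)))
          + ρ*((m.factorial:ℝ)*Complex.abs (A.coeff m))
          + ρ*((m.factorial:ℝ)*Complex.abs (Bq.coeff (m+1)))
          + ((m.factorial:ℝ)*Complex.abs (H.coeff m)
             + (m.factorial:ℝ)*Complex.abs (H.coeff (m+1))) := by
        intro m _
        rw [hcoeff m]
        have t4 : Complex.abs (H.coeff m - H.coeff (m+1)) ≤
            Complex.abs (H.coeff m) + Complex.abs (H.coeff (m+1)) := by
          rw [sub_eq_add_neg]
          refine le_trans (Complex.abs.add_le _ _) ?_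
          rw [Complex.abs.map_neg]
        have t3 := Complex.abs.add_le ((1-(ρ:ℂ))*(A.coeff (m+1))) ((ρ:ℂ)*(A.coeff m))
        have t2 := Complex.abs.add_le ((1-(ρ:ℂ))*(A.coeff (m+1)) + (ρ:ℂ)*(A.coeff m))
            ((ρ:ℂ)*(Bq.coeff (m+1)))
        have t1 := Complex.abs.add_le ((1-(ρ:ℂ))*(A.coeff (m+1)) + (ρ:ℂ)*(A.coeff m)
            + (ρ:ℂ)*(Bq.coeff (m+1))) (H.coeff m - H.coeff (m+1))
        rw [map_mul, habs1ρ] at t3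
        rw [map_mul (Complex.abs) ((ρ:ℂ)) (A.coeff m), habsρ] at t3
        rw [map_mul, habsρ] at t2
        have hsum : Complex.abs ((1-(ρ:ℂ))*(A.coeff (m+1)) + (ρ:ℂ)*(A.coeff m)
              + (ρ:ℂ)*(Bq.coeff (m+1)) + (H.coeff m - H.coeff (m+1))) ≤
            (1-ρ)*Complex.abs (A.coeff (m+1)) + ρ*Complex.abs (A.coeff m)
              + ρ*Complex.abs (Bq.coeff (m+1))
              + (Complex.abs (H.coeff m) + Complex.abs (H.coeff (m+1))) := by
          linarith
        have hfpos : (0:ℝ) ≤ (m.factorial:ℝ) := by positivity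
        calc (m.factorial:ℝ) * Complex.abs ((1-(ρ:ℂ))*(A.coeff (m+1)) + (ρ:ℂ)*(A.coeff m)
              + (ρ:ℂ)*(Bq.coeff (m+1)) + (H.coeff m - H.coeff (m+1)))
            ≤ (m.factorial:ℝ) * ((1-ρ)*Complex.abs (A.coeff (m+1)) + ρ*Complex.abs (A.coeff m)
              + ρ*Complex.abs (Bq.coeff (m+1))
              + (Complex.abs (H.coeff m) + Complex.abs (H.coeff (m+1)))) :=
            mul_le_mul_of_nonneg_left hsum hfpos
          _ = _ := by ring
      have hs := Finset.sum_le_sum hterm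
      have hL : Nn (ahat P j k) = ∑ m ∈ Finset.range ((ahat P j k).natDegree + 1),
          (m.factorial:ℝ) * Complex.abs ((ahat P j k).coeff m) := rfl
      rw [← hL] at hs
      rw [Finset.sum_add_distrib, Finset.sum_add_distrib, Finset.sum_add_distrib,
        Finset.sum_add_distrib, ← Finset.mul_sum, ← Finset.mul_sum, ← Finset.mul_sum] at hs
      set D := (ahat P j k).natDegree + 1
      have b1 : ∑ m ∈ Finset.range D, (m.factorial:ℝ)*Complex.abs (A.coeff (m+1)) ≤ Nn A :=
        nn_shift_le' A D
      have b2 : ∑ m ∈ Finset.range D, (m.factorial:ℝ)*Complex.abs (A.coeff m) ≤ Nn A :=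
        nn_sum_le A D
      have b3 : ∑ m ∈ Finset.range D, (m.factorial:ℝ)*Complex.abs (Bq.coeff (m+1)) ≤ Nn Bq :=
        nn_shift_le' Bq D
      have b4 : ∑ m ∈ Finset.range D, (m.factorial:ℝ)*Complex.abs (H.coeff m) ≤ Nn H :=
        nn_sum_le H D
      have b5 : ∑ m ∈ Finset.range D, (m.factorial:ℝ)*Complex.abs (H.coeff (m+1)) ≤ Nn H :=
        nn_shift_le' H D
      nlinarith [hs, b1, b2, b3, b4, b5, mul_le_mul_of_nonneg_left b1 (by linarith : (0:ℝ) ≤ 1-ρ),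
        mul_le_mul_of_nonneg_left b2 hρ0.le, mul_le_mul_of_nonneg_left b3 hρ0.le]
    -- multiply by j!
    have e1 := IH (k-j) (by omega) j
    have e2 := IH (k-j) (by omega) (j-1)
    have e3eq := jfact_nn_hasse (c0 P k) j k (c0_natDegree_le hF k) hjk
    have e3le : ∑ i ∈ Finset.Ico j (k+1), (i.factorial:ℝ) * Complex.abs ((c0 P k).coeff i)
        ≤ ∑ i ∈ Finset.Ico j (k+1), ((1-ρ)*eps i + i*ρ*eps (i-1)) * Cc^(k-i) := by
      apply Finset.sum_le_sum
      intro i hi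
      simp only [Finset.mem_Ico] at hi
      exact hgb i (by omega) (by omega)
    have hjfact : (j.factorial : ℝ) = j * ((j-1).factorial : ℝ) := by
      have hn : j.factorial = j * (j-1).factorial := by
        conv_lhs => rw [show j = (j-1)+1 by omega]
        rw [Nat.factorial_succ, show (j-1)+1 = j by omega]
      rw [hn]; push_cast; ring
    have hfj0 : (0:ℝ) ≤ (j.factorial:ℝ) := by positivity
    have hmulj : (j.factorial:ℝ) * Nn (ahat P j k) ≤
        (j.factorial:ℝ) * Nn A + ρ * ((j:ℝ) * (((j-1).factorial:ℝ) * Nn Bq))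
          + 2 * ((j.factorial:ℝ) * Nn H) := by
      have := mul_le_mul_of_nonneg_left hNle hfj0
      calc (j.factorial:ℝ) * Nn (ahat P j k)
          ≤ (j.factorial:ℝ) * (Nn A + ρ * Nn Bq + 2 * Nn H) := this
        _ = (j.factorial:ℝ) * Nn A + ρ * ((j.factorial:ℝ) * Nn Bq)
            + 2 * ((j.factorial:ℝ) * Nn H) := by ring
        _ = _ := by rw [hjfact]; ring
    have hpj : Cc^(k-j) = Cc^k * x^j := powsplit j k hjk
    have hB2 : ρ * ((j:ℝ) * (((j-1).factorial:ℝ) * Nn Bq)) ≤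
        ρ * ((j:ℝ) * (eps (j-1) * Cc^(k-j))) := by
      apply mul_le_mul_of_nonneg_left _ hρ0.le
      apply mul_le_mul_of_nonneg_left e2 (by positivity)
    have hH2 : (j.factorial:ℝ) * Nn H ≤
        ∑ i ∈ Finset.Ico j (k+1), ((1-ρ)*eps i + i*ρ*eps (i-1)) * Cc^(k-i) := by
      rw [hHdef, e3eq]
      exact e3le
    rcases Nat.eq_or_lt_of_le hj1 with hj1' | hj2
    · -- j = 1
      have hj1'' : j = 1 := hj1'.symm
      subst hj1''
      have hsum1 : ∑ i ∈ Finset.Ico 1 (k+1), ((1-ρ)*eps i + i*ρ*eps (i-1)) * Cc^(k-i)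
          ≤ ((1-ρ)*(23/50) + ρ) * (Cc^k * x)
            + Cc^k * (((23:ℝ)/50/2) * ((2*x)^2 / (1-2*x))) := by
        rw [Finset.sum_eq_sum_Ico_succ_bot (by omega : 1 < k+1)]
        have h1t : ((1-ρ)*eps 1 + ((1:ℕ):ℝ)*ρ*eps (1-1)) * Cc^(k-1)
            = ((1-ρ)*(23/50) + ρ) * (Cc^k * x) := by
          rw [eps_succ 1 (le_refl 1), show (1:ℕ)-1 = 0 from rfl, eps_zero,
            powsplit 1 k (by omega), pow_one]
          push_cast
          ring
        rw [h1t]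
        exact add_le_add (le_refl _) (hIx 2 (le_refl 2))
      have hK1 : ((23:ℝ)/50 + ρ)*x + 2*((1-ρ)*(23/50)+ρ)*x
          + 4*(23/50)*x^2/(1-2*x) ≤ 23/50 := by
        have hk1' := K1' ρ x hρ0 hρ1 hx0 hx1 hx2
        have hd : 4*(23/50)*x^2/(1-2*x) ≤ (23/50)
            - (((23:ℝ)/50+ρ)*x + 2*((1-ρ)*(23/50)+ρ)*x) := by
          rw [div_le_iff₀ hu0]
          nlinarith [hk1']
        linarith
      have hpj1 : Cc^(k-1) = Cc^k * x := by rw [powsplit 1 k hjk, pow_one]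
      have eA : Nn A ≤ (23/50) * (Cc^k * x) := by
        have := e1
        rw [Nat.factorial_one, Nat.cast_one, one_mul, eps_succ 1 (le_refl 1), hpj1] at this
        linarith
      have eB : Nn Bq ≤ Cc^k * x := by
        have := e2
        rw [show (1:ℕ)-1 = 0 from rfl] at this
        simp only [Nat.factorial_zero, Nat.cast_one, one_mul, eps_zero] at this
        rw [hpj1] at this
        linarith
      have eH : Nn H ≤ ((1-ρ)*(23/50) + ρ) * (Cc^k * x)
          + Cc^k * (((23:ℝ)/50/2) * ((2*x)^2 / (1-2*x))) := by
        have h := hH2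
        rw [Nat.factorial_one, Nat.cast_one, one_mul] at h
        linarith [hsum1]
      have htot : Nn (ahat P 1 k) ≤ Cc^k * (((23:ℝ)/50 + ρ)*x + 2*((1-ρ)*(23/50)+ρ)*x
          + 4*(23/50)*x^2/(1-2*x)) := by
        have hρB : ρ * Nn Bq ≤ ρ * (Cc^k * x) := mul_le_mul_of_nonneg_left eB hρ0.le
        have h2H : 2 * Nn H ≤ 2 * (((1-ρ)*(23/50) + ρ) * (Cc^k * x)
            + Cc^k * (((23:ℝ)/50/2) * ((2*x)^2 / (1-2*x)))) := by linarith
        have heq : (23/50) * (Cc^k * x) + ρ * (Cc^k * x)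
            + 2 * (((1-ρ)*(23/50) + ρ) * (Cc^k * x)
              + Cc^k * (((23:ℝ)/50/2) * ((2*x)^2 / (1-2*x))))
            = Cc^k * (((23:ℝ)/50 + ρ)*x + 2*((1-ρ)*(23/50)+ρ)*x
              + 4*(23/50)*x^2/(1-2*x)) := by
          field_simp
          ring
        linarith [hNle]
      rw [Nat.factorial_one, Nat.cast_one, one_mul, eps_succ 1 (le_refl 1)]
      calc Nn (ahat P 1 k) ≤ _ := htot
        _ ≤ Cc^k * (23/50) := mul_le_mul_of_nonneg_left hK1 (by positivity)
        _ = 23/50 * Cc^k := by ring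
    · -- 2 ≤ j
      have hj2 : 2 ≤ j := hj2
      have hsumj := hIx j hj2
      have eA : (j.factorial:ℝ) * Nn A ≤ (23/50) * (Cc^k * x^j) := by
        have := e1
        rw [eps_succ j (by omega), hpj] at this
        linarith
      have eB : ((j-1).factorial:ℝ) * Nn Bq ≤ (23/50) * (Cc^k * x^j) := by
        have := e2
        rw [eps_succ (j-1) (by omega), hpj] at this
        linarith
      have eH : (j.factorial:ℝ) * Nn H ≤ Cc^k * (((23:ℝ)/50/2) * ((2*x)^j / (1-2*x))) := by
        exact le_trans hH2 hsumj
      have h2x1 : 2*x ≤ 1 := by nlinarith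
      have hp2x : (2*x)^j ≤ (2*x)^2 := pow_le_pow_of_le_one (by linarith) h2x1 hj2
      have hdivle : (2*x)^j / (1-2*x) ≤ (2*x)^2 / (1-2*x) := by
        rw [div_eq_mul_inv, div_eq_mul_inv]
        exact mul_le_mul_of_nonneg_right hp2x (inv_nonneg.2 hu0.le)
      have hjpow : (1 + (j:ℝ)) ≤ 2^j := by
        have h1 : j + 1 ≤ 2^j := Nat.lt_two_pow_self
        have h2 : ((j:ℝ) + 1) ≤ (2:ℝ)^j := by exact_mod_cast h1
        linarith
      have hxj2 : (1 + (j:ℝ)*ρ) * x^j ≤ (2*x)^2 := by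
        have hxp : (0:ℝ) ≤ x^j := by positivity
        have h1 : (1 + (j:ℝ)*ρ) ≤ 1 + (j:ℝ) := by nlinarith [Nat.cast_nonneg (α := ℝ) j]
        have h2 : (1 + (j:ℝ)*ρ) * x^j ≤ (2:ℝ)^j * x^j := by
          apply mul_le_mul_of_nonneg_right _ hxp
          linarith
        have h3 : (2:ℝ)^j * x^j = (2*x)^j := by rw [mul_pow]
        calc (1 + (j:ℝ)*ρ) * x^j ≤ (2:ℝ)^j * x^j := h2
          _ = (2*x)^j := h3
          _ ≤ (2*x)^2 := hp2x
      have hK2 := K2' x hx0 hx1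
      have htot : (j.factorial:ℝ) * Nn (ahat P j k) ≤
          (23/50) * Cc^k * ((2*x)^2 + (2*x)^2/(1-2*x)) := by
        have step : (j.factorial:ℝ) * Nn (ahat P j k) ≤
            (23/50) * (Cc^k * x^j) + ρ * ((j:ℝ) * ((23/50) * (Cc^k * x^j)))
              + 2 * (Cc^k * (((23:ℝ)/50/2) * ((2*x)^j / (1-2*x)))) := by
          have hb2 : ρ * ((j:ℝ) * (((j-1).factorial:ℝ) * Nn Bq)) ≤
              ρ * ((j:ℝ) * ((23/50) * (Cc^k * x^j))) := by
            apply mul_le_mul_of_nonneg_left _ hρ0.le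
            exact mul_le_mul_of_nonneg_left eB (by positivity)
          linarith [hmulj, eA, eH]
        have hC0 : (0:ℝ) ≤ Cc^k := by positivity
        have heq2 : (23/50) * (Cc^k * x^j) + ρ * ((j:ℝ) * ((23/50) * (Cc^k * x^j)))
              + 2 * (Cc^k * (((23:ℝ)/50/2) * ((2*x)^j / (1-2*x))))
            = (23/50) * Cc^k * ((1 + (j:ℝ)*ρ) * x^j + (2*x)^j/(1-2*x)) := by
          ring
        rw [heq2] at step
        refine le_trans step ?_
        have hmono : (1 + (j:ℝ)*ρ) * x^j + (2*x)^j/(1-2*x) ≤ (2*x)^2 + (2*x)^2/(1-2*x) := by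
          linarith [hxj2, hdivle]
        apply mul_le_mul_of_nonneg_left hmono (by positivity)
      rw [eps_succ j (by omega)]
      calc (j.factorial:ℝ) * Nn (ahat P j k) ≤ _ := htot
        _ ≤ (23/50) * Cc^k * 1 := by
          apply mul_le_mul_of_nonneg_left hK2 (by positivity)
        _ = 23/50 * Cc^k := by ring

end S16


theorem stmt16 (ρ : ℝ) (hρ : ρ ∈ Set.Ioo (0 : ℝ) 1) (P : ℕ → Bzy)
    (hF : FuncEq ρ P) (hI : IndepY P) (hB : Boundary ρ P) :
    ∀ k l m : ℕ, ∀ z : ℂ, ‖z‖ ≤ 1 →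
      ‖((Polynomial.derivative^[m]) (aCoef P l k)).eval z‖ ≤
        (max (Real.exp 2) (2 / (1 - ρ))) ^ k := by
  intro k l m z hz
  have hkey := S16.key hρ hF hB k l
  have h1 : ‖((Polynomial.derivative^[m]) (aCoef P l k)).eval z‖ ≤ S16.Nn (aCoef P l k) :=
    S16.nn_iter_deriv_eval (aCoef P l k) m hz
  have hN : S16.Nn (aCoef P l k) = (l.factorial : ℝ) * S16.Nn (S16.ahat P l k) := by
    rw [S16.aCoef_eq P l k, S16.nn_nsmul]
  rw [hN] at h1
  have hC0 : (0:ℝ) ≤ (max (Real.exp 2) (2/(1-ρ)))^k := by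
    have he : (0:ℝ) < Real.exp 2 := Real.exp_pos 2
    have := le_trans he.le (le_max_left (Real.exp 2) (2/(1-ρ)))
    positivity
  have h2 : S16.eps l * (max (Real.exp 2) (2/(1-ρ)))^k ≤ (max (Real.exp 2) (2/(1-ρ)))^k :=
    mul_le_of_le_one_left hC0 (S16.eps_le_one l)
  linarith
end

section
/- In the ring of formal power series in q with coefficients in the polynomial ring ℤ[x], the infinite product ∏_{m=1}^{∞} (1 + x·q^m) equals Σ_{k≥0} (Σ_{j≥0} D(k,j)·x^j)·q^k; that is, for every k ≥ 0 the coefficient of q^k in the product is the polynomial Σ_{j≥0} D(k,j)·x^j. -/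
/-- `D l j` is the number of sets of `j` pairwise distinct positive integers summing to `l`
(any such set is contained in `{1, ..., l}`); in particular `D 0 0 = 1` and `D l j = 0`
when no such set exists. -/
def D (l j : ℕ) : ℕ :=
  (((Finset.range (l + 1)).powerset).filter
    (fun s => s.card = j ∧ s.sum id = l ∧ 0 ∉ s)).card


open PowerSeries Polynomial Finset in
lemma coeff_prod_aux (k N : ℕ) :
    PowerSeries.coeff (R := Polynomial ℤ) k
        (∏ m ∈ Finset.Icc 1 N,
          (1 + PowerSeries.C (R := Polynomial ℤ) Polynomial.X * PowerSeries.X ^ m)) =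
    ∑ t ∈ ((Finset.Icc 1 N).powerset).filter (fun t => t.sum id = k),
      (Polynomial.X : ℤ[X]) ^ t.card := by
  have h1 : ∀ m ∈ Finset.Icc 1 N,
      (1 + PowerSeries.C (R := Polynomial ℤ) Polynomial.X * PowerSeries.X ^ m) =
      (PowerSeries.C (R := Polynomial ℤ) Polynomial.X * PowerSeries.X ^ m + 1) := by
    intro m _; ring
  rw [Finset.prod_congr rfl h1, Finset.prod_add]
  simp only [Finset.prod_const_one, mul_one]
  rw [map_sum]
  have h2 : ∀ t : Finset ℕ,
      (∏ m ∈ t, PowerSeries.C (R := Polynomial ℤ) Polynomial.X * PowerSeries.X ^ m) =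
      PowerSeries.C (R := Polynomial ℤ) (Polynomial.X ^ t.card) * PowerSeries.X ^ (t.sum id) := by
    intro t
    rw [Finset.prod_mul_distrib, Finset.prod_const, Finset.prod_pow_eq_pow_sum, map_pow]
    rfl
  rw [Finset.sum_congr rfl (fun t _ => by rw [h2])]
  rw [Finset.sum_filter]
  refine Finset.sum_congr rfl fun t _ => ?_
  rw [PowerSeries.coeff_C_mul, PowerSeries.coeff_X_pow]
  split_ifs with h1 h2 h2 <;> simp_all

theorem stmt19 : ∀ k N : ℕ, k ≤ N →
    PowerSeries.coeff (R := Polynomial ℤ) k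
        (∏ m ∈ Finset.Icc 1 N,
          (1 + PowerSeries.C (R := Polynomial ℤ) Polynomial.X * PowerSeries.X ^ m)) =
      ∑ j ∈ Finset.range (k + 1), Polynomial.C (D k j : ℤ) * Polynomial.X ^ j := by
  intro k N hk
  rw [coeff_prod_aux]
  -- identify the index set
  have hset : ((Finset.Icc 1 N).powerset).filter (fun t => t.sum id = k) =
      ((Finset.range (k + 1)).powerset).filter (fun s => s.sum id = k ∧ 0 ∉ s) := by
    ext s
    simp only [Finset.mem_filter, Finset.mem_powerset, Finset.subset_iff, Finset.mem_Icc,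
      Finset.mem_range]
    constructor
    · rintro ⟨hsub, hsum⟩
      have h0 : 0 ∉ s := fun h => by simpa using (hsub h).1
      refine ⟨fun x hx => ?_, hsum, h0⟩
      have : x ≤ s.sum id := Finset.single_le_sum (fun i _ => Nat.zero_le (id i)) hx
      omega
    · rintro ⟨hsub, hsum, h0⟩
      refine ⟨fun x hx => ?_, hsum⟩
      have h1 : x < k + 1 := hsub hx
      have h2 : x ≠ 0 := fun h => h0 (h ▸ hx)
      omega
  rw [hset]
  -- group by cardinality
  have hmaps : ∀ s ∈ ((Finset.range (k + 1)).powerset).filter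
      (fun s => s.sum id = k ∧ 0 ∉ s), s.card ∈ Finset.range (k + 1) := by
    intro s hs
    simp only [Finset.mem_filter] at hs
    obtain ⟨_, hsum, h0⟩ := hs
    have : s.card ≤ s.sum id := by
      calc s.card = ∑ _i ∈ s, 1 := by simp
      _ ≤ s.sum id := Finset.sum_le_sum (fun i hi => by
          have : i ≠ 0 := fun h => h0 (h ▸ hi)
          simp only [id_eq]; omega)
    rw [Finset.mem_range]; omega
  rw [← Finset.sum_fiberwise_of_maps_to hmaps (fun s => (Polynomial.X : Polynomial ℤ) ^ s.card)]
  refine Finset.sum_congr rfl fun j _ => ?_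
  have hfib : (((Finset.range (k + 1)).powerset).filter
      (fun s => s.sum id = k ∧ 0 ∉ s)).filter (fun s => s.card = j) =
      ((Finset.range (k + 1)).powerset).filter
      (fun s => s.card = j ∧ s.sum id = k ∧ 0 ∉ s) := by
    rw [Finset.filter_filter]
    exact Finset.filter_congr (fun s _ => by tauto)
  rw [hfib]
  have hcongr : ∑ s ∈ ((Finset.range (k + 1)).powerset).filter
      (fun s => s.card = j ∧ s.sum id = k ∧ 0 ∉ s), (Polynomial.X : Polynomial ℤ) ^ s.card =
      ∑ _s ∈ ((Finset.range (k + 1)).powerset).filter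
      (fun s => s.card = j ∧ s.sum id = k ∧ 0 ∉ s), (Polynomial.X : Polynomial ℤ) ^ j :=
    Finset.sum_congr rfl fun s hs => by
      rw [Finset.mem_filter] at hs
      rw [hs.2.1]
  rw [hcongr, Finset.sum_const, D]
  simp [nsmul_eq_mul, Polynomial.C_eq_natCast]
end
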